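/- arXiv:2210.08176 — 13 statements merged into one kernel-verified Lean document; each statement's English description precedes it below -/
import Mathlib

section
/- Let n ≥ 1, let E = ℝⁿ (EuclideanSpace ℝ (Fin n)), let η > 0, and let F : E → E be a continuous function that is η-strongly monotone, i.e. ⟪F x − F y, x − y⟫ ≥ η‖x − y‖² for all x, y ∈ E. Then F is bijective. -/
open RealInnerProductSpace MeasureTheory ContinuousLinearMap Filter Metric Topology Set
open scoped ContDiff

theorem aux_anti {n : ℕ} {η : ℝ} (hη : 0 < η)
    (G : EuclideanSpace ℝ (Fin n) → EuclideanSpace ℝ (Fin n))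
    (hmono : ∀ x y, ⟪G x - G y, x - y⟫ ≥ η * ‖x - y‖ ^ 2) :
    ∀ x y, η * ‖x - y‖ ≤ ‖G x - G y‖ := by
  intro x y
  rcases eq_or_ne x y with rfl | hxy
  · simp
  · have h1 := hmono x y
    have h2 : ⟪G x - G y, x - y⟫ ≤ ‖G x - G y‖ * ‖x - y‖ := real_inner_le_norm _ _
    have h3 : 0 < ‖x - y‖ := by rw [norm_pos_iff]; exact sub_ne_zero.mpr hxy
    nlinarith

theorem aux_deriv {n : ℕ} {η : ℝ} (hη : 0 < η)
    (G : EuclideanSpace ℝ (Fin n) → EuclideanSpace ℝ (Fin n))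
    (hG : ContDiff ℝ ∞ G)
    (hmono : ∀ x y, ⟪G x - G y, x - y⟫ ≥ η * ‖x - y‖ ^ 2) :
    ∀ (x v : EuclideanSpace ℝ (Fin n)), ⟪v, fderiv ℝ G x v⟫ ≥ η * ‖v‖ ^ 2 := by
  intro x v
  have hdiff : HasFDerivAt G (fderiv ℝ G x) x := (hG.differentiable (by simp) x).hasFDerivAt
  have hdiff' : HasFDerivAt G (fderiv ℝ G x) (x + (0:ℝ) • v) := by simpa using hdiff
  have hc : HasDerivAt (fun t : ℝ => x + t • v) v 0 := by
    simpa using ((hasDerivAt_id (0:ℝ)).smul_const v).const_add x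
  have hGc : HasDerivAt (fun t : ℝ => G (x + t • v)) (fderiv ℝ G x v) 0 :=
    hdiff'.comp_hasDerivAt 0 hc
  set h : ℝ → ℝ := fun t => ⟪v, G (x + t • v) - G x⟫ with hh
  have hd : HasDerivAt h ⟪v, fderiv ℝ G x v⟫ 0 := by
    have := (((innerSL ℝ (E := EuclideanSpace ℝ (Fin n))) v).hasFDerivAt).comp_hasDerivAt 0
      (hGc.sub_const (G x))
    simp only [Function.comp_def] at this
    exact this
  have hslope : Tendsto (slope h 0) (𝓝[>] (0:ℝ)) (𝓝 ⟪v, fderiv ℝ G x v⟫) :=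
    (hasDerivAt_iff_tendsto_slope.mp hd).mono_left
      (nhdsWithin_mono 0 (fun t ht => ne_of_gt ht))
  refine ge_of_tendsto hslope ?_
  filter_upwards [self_mem_nhdsWithin] with t (ht : 0 < t)
  have hm := hmono (x + t • v) x
  have he : (x + t • v) - x = t • v := by abel
  rw [he, inner_smul_right] at hm
  have hn : ‖t • v‖ ^ 2 = t ^ 2 * ‖v‖ ^ 2 := by
    simp [norm_smul, mul_pow, Real.norm_eq_abs, sq_abs]
  rw [hn] at hm
  have hm' : t * h t ≥ η * (t ^ 2 * ‖v‖ ^ 2) := by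
    have : ⟪G (x + t • v) - G x, v⟫ = h t := real_inner_comm _ _
    rw [this] at hm; exact hm
  have h0 : h 0 = 0 := by simp [hh]
  have : slope h 0 t = h t / t := by rw [slope_def_field, h0, sub_zero, sub_zero]
  rw [this, le_div_iff₀ ht]
  nlinarith

theorem aux_smooth_surj {n : ℕ} {η : ℝ} (hη : 0 < η)
    (G : EuclideanSpace ℝ (Fin n) → EuclideanSpace ℝ (Fin n))
    (hG : ContDiff ℝ ∞ G)
    (hmono : ∀ x y, ⟪G x - G y, x - y⟫ ≥ η * ‖x - y‖ ^ 2) :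
    Function.Surjective G := by
  have hanti := aux_anti hη G hmono
  have hderiv := aux_deriv hη G hG hmono
  have hopen : IsOpen (Set.range G) := by
    rw [isOpen_iff_mem_nhds]
    rintro y ⟨a, rfl⟩
    have hinj : Function.Injective (fderiv ℝ G a) := by
      intro u w huw
      have h1 := hderiv a (u - w)
      rw [map_sub, huw, sub_self, inner_zero_right] at h1
      have : ‖u - w‖ ^ 2 ≤ 0 := by nlinarith
      have : u - w = 0 := by
        rw [← norm_eq_zero]; nlinarith [sq_nonneg ‖u - w‖, norm_nonneg (u - w)]
      exact sub_eq_zero.mp this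
    have hsurj : Function.Surjective (fderiv ℝ G a) :=
      LinearMap.injective_iff_surjective.mp hinj
    let le : EuclideanSpace ℝ (Fin n) ≃ₗ[ℝ] EuclideanSpace ℝ (Fin n) :=
      LinearEquiv.ofBijective ((fderiv ℝ G a) : EuclideanSpace ℝ (Fin n) →ₗ[ℝ] EuclideanSpace ℝ (Fin n)) ⟨hinj, hsurj⟩
    let e := le.toContinuousLinearEquiv
    have hstrict : HasStrictFDerivAt G (e : EuclideanSpace ℝ (Fin n) →L[ℝ] EuclideanSpace ℝ (Fin n)) a := by
      have h := (hG.contDiffAt (x := a)).hasStrictFDerivAt (by simp)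
      convert h using 1
      all_goals rfl
    have hmap := hstrict.map_nhds_eq_of_equiv
    rw [← hmap, mem_map]
    exact Filter.mem_of_superset Filter.univ_mem (fun t _ => Set.mem_range_self t)
  have hclosed : IsClosed (Set.range G) := by
    refine isClosed_of_closure_subset ?_
    intro z hz
    obtain ⟨u, hu, hlim⟩ := mem_closure_iff_seq_limit.mp hz
    choose x hx using hu
    have hGc : CauchySeq u := hlim.cauchySeq
    have hcx : CauchySeq x := by
      rw [Metric.cauchySeq_iff] at hGc ⊢
      intro ε hε
      obtain ⟨N, hN⟩ := hGc (η * ε) (by positivity)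
      refine ⟨N, fun m hm k hk => ?_⟩
      have h1 := hanti (x m) (x k)
      have h2 := hN m hm k hk
      rw [dist_eq_norm] at h2 ⊢
      rw [hx m, hx k] at h1
      have := mul_lt_mul_of_pos_left (lt_of_le_of_lt h1 h2) (inv_pos.mpr hη)
      calc ‖x m - x k‖ = η⁻¹ * (η * ‖x m - x k‖) := by field_simp
        _ < η⁻¹ * (η * ε) := by
            exact mul_lt_mul_of_pos_left (lt_of_le_of_lt h1 h2) (inv_pos.mpr hη)
        _ = ε := by field_simp
    obtain ⟨a, ha⟩ := cauchySeq_tendsto_of_complete hcx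
    refine ⟨a, ?_⟩
    have h1 : Filter.Tendsto (fun k => G (x k)) Filter.atTop (𝓝 (G a)) :=
      ((hG.continuous.tendsto a).comp ha)
    simp only [hx] at h1
    exact tendsto_nhds_unique h1 hlim
  have hne : (Set.range G).Nonempty := ⟨G 0, Set.mem_range_self 0⟩
  have := IsClopen.eq_univ ⟨hclosed, hopen⟩ hne
  exact Set.range_eq_univ.mp this

open scoped Convolution

theorem aux_moll_mono {n : ℕ} {η : ℝ}
    (F : EuclideanSpace ℝ (Fin n) → EuclideanSpace ℝ (Fin n)) (hcont : Continuous F)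
    (hmono : ∀ x y, ⟪F x - F y, x - y⟫ ≥ η * ‖x - y‖ ^ 2)
    (φ : ContDiffBump (0 : EuclideanSpace ℝ (Fin n))) (x y : EuclideanSpace ℝ (Fin n)) :
    ⟪(φ.normed volume ⋆[ContinuousLinearMap.lsmul ℝ ℝ, volume] F) x
      - (φ.normed volume ⋆[ContinuousLinearMap.lsmul ℝ ℝ, volume] F) y, x - y⟫
      ≥ η * ‖x - y‖ ^ 2 := by
  set ψ := φ.normed volume with hψ
  have hψc : Continuous ψ := φ.continuous_normed
  have hψs : HasCompactSupport ψ := φ.hasCompactSupport_normed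
  have hint : ∀ z : EuclideanSpace ℝ (Fin n),
      Integrable (fun t => ψ t • F (z - t)) volume := by
    intro z
    apply Continuous.integrable_of_hasCompactSupport
    · exact hψc.smul (hcont.comp (continuous_const.sub continuous_id))
    · exact hψs.smul_right
  have hconv : ∀ z : EuclideanSpace ℝ (Fin n),
      (ψ ⋆[ContinuousLinearMap.lsmul ℝ ℝ, volume] F) z = ∫ t, ψ t • F (z - t) := fun z => rfl
  rw [hconv, hconv, ← integral_sub (hint x) (hint y)]
  have hI : Integrable (fun t => ψ t • (F (x - t) - F (y - t))) volume := by
    exact ((hint x).sub (hint y)).congr (Eventually.of_forall fun t => by simp [smul_sub])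
  have heq : (fun t => ψ t • F (x - t) - ψ t • F (y - t))
      = fun t => ψ t • (F (x - t) - F (y - t)) := by
    funext t; rw [smul_sub]
  rw [heq]
  have h1 : ⟪∫ t, ψ t • (F (x - t) - F (y - t)), x - y⟫
      = ∫ t, ψ t * ⟪F (x - t) - F (y - t), x - y⟫ := by
    rw [real_inner_comm, ← integral_inner hI (x - y)]
    congr 1; funext t
    rw [real_inner_smul_right, real_inner_comm]
  rw [h1]
  have h2 : ∀ t, ψ t * (η * ‖x - y‖ ^ 2) ≤ ψ t * ⟪F (x - t) - F (y - t), x - y⟫ := by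
    intro t
    have hm := hmono (x - t) (y - t)
    have he : (x - t) - (y - t) = x - y := by abel
    rw [he] at hm
    exact mul_le_mul_of_nonneg_left hm (φ.nonneg_normed t)
  have hIlhs : Integrable (fun t => ψ t * (η * ‖x - y‖ ^ 2)) volume :=
    (φ.integrable_normed).mul_const _
  have hIrhs : Integrable (fun t => ψ t * ⟪F (x - t) - F (y - t), x - y⟫) volume := by
    apply Continuous.integrable_of_hasCompactSupport
    · exact hψc.mul (((hcont.comp (continuous_const.sub continuous_id)).sub
        (hcont.comp (continuous_const.sub continuous_id))).inner continuous_const)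
    · exact hψs.mul_right
  calc η * ‖x - y‖ ^ 2 = ∫ t, ψ t * (η * ‖x - y‖ ^ 2) := by
        rw [MeasureTheory.integral_mul_const, φ.integral_normed, one_mul]
    _ ≤ ∫ t, ψ t * ⟪F (x - t) - F (y - t), x - y⟫ := integral_mono hIlhs hIrhs h2


/-- An `η`-strongly monotone continuous function on `ℝⁿ` (`n ≥ 1`) is bijective. -/
theorem strongly_monotone_continuous_bijective
    (n : ℕ) (hn : 1 ≤ n) (η : ℝ) (hη : 0 < η)
    (F : EuclideanSpace ℝ (Fin n) → EuclideanSpace ℝ (Fin n))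
    (hcont : Continuous F)
    (hmono : ∀ x y : EuclideanSpace ℝ (Fin n),
      ⟪F x - F y, x - y⟫ ≥ η * ‖x - y‖ ^ 2) :
    Function.Bijective F := by
  constructor
  · intro x y hxy
    by_contra hne
    have h := hmono x y
    rw [hxy, sub_self, inner_zero_left] at h
    have h2 : 0 < ‖x - y‖ := by rw [norm_pos_iff]; exact sub_ne_zero.mpr hne
    nlinarith [mul_pos hη (mul_pos h2 h2)]
  · intro b
    let φ : ℕ → ContDiffBump (0 : EuclideanSpace ℝ (Fin n)) := fun k =>
      ⟨(2 * ((k : ℝ) + 1))⁻¹, ((k : ℝ) + 1)⁻¹, by positivity, by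
        have h1 : (0:ℝ) < (k : ℝ) + 1 := by positivity
        have h2 : (k : ℝ) + 1 < 2 * ((k : ℝ) + 1) := by linarith
        exact inv_strictAnti₀ h1 h2⟩
    let Fm : ℕ → (EuclideanSpace ℝ (Fin n) → EuclideanSpace ℝ (Fin n)) := fun k =>
      (φ k).normed volume ⋆[ContinuousLinearMap.lsmul ℝ ℝ, volume] F
    have hFm_smooth : ∀ k, ContDiff ℝ ∞ (Fm k) := fun k =>
      HasCompactSupport.contDiff_convolution_left _ (φ k).hasCompactSupport_normed
        ((φ k).contDiff_normed) (hcont.locallyIntegrable)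
    have hFm_mono : ∀ k, ∀ x y : EuclideanSpace ℝ (Fin n),
        ⟪Fm k x - Fm k y, x - y⟫ ≥ η * ‖x - y‖ ^ 2 := fun k =>
      aux_moll_mono F hcont hmono (φ k)
    have hsurj : ∀ k, Function.Surjective (Fm k) := fun k =>
      aux_smooth_surj hη _ (hFm_smooth k) (hFm_mono k)
    choose x hx using fun k => hsurj k b
    have hr : Tendsto (fun k : ℕ => (φ k).rOut) atTop (𝓝 0) := by
      have : (fun k : ℕ => (φ k).rOut) = fun k : ℕ => 1 / ((k : ℝ) + 1) := by
        funext k; simp [φ, one_div]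
      rw [this]
      exact tendsto_one_div_add_atTop_nhds_zero_nat
    have hconv0 : ∀ z : EuclideanSpace ℝ (Fin n),
        Tendsto (fun k => Fm k z) atTop (𝓝 (F z)) := fun z =>
      ContDiffBump.convolution_tendsto_right_of_continuous hr hcont z
    obtain ⟨C, hC⟩ : ∃ C : ℝ, ∀ k, ‖b - Fm k 0‖ ≤ C := by
      have ht : Tendsto (fun k => ‖b - Fm k 0‖) atTop (𝓝 ‖b - F 0‖) :=
        (tendsto_const_nhds.sub (hconv0 0)).norm
      obtain ⟨C, hC⟩ := ht.bddAbove_range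
      exact ⟨C, fun k => hC (Set.mem_range_self k)⟩
    have hbound : ∀ k, ‖x k‖ ≤ C / η := by
      intro k
      have hm := hFm_mono k (x k) 0
      rw [hx k, sub_zero] at hm
      have h1 : ⟪b - Fm k 0, x k⟫ ≤ ‖b - Fm k 0‖ * ‖x k‖ := real_inner_le_norm _ _
      have h2 : ‖b - Fm k 0‖ * ‖x k‖ ≤ C * ‖x k‖ :=
        mul_le_mul_of_nonneg_right (hC k) (norm_nonneg _)
      have h3 : (0:ℝ) ≤ C := le_trans (norm_nonneg _) (hC 0)
      rw [le_div_iff₀ hη]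
      nlinarith [norm_nonneg (x k)]
    obtain ⟨a, -, ψ, hψmono, hψa⟩ :=
      tendsto_subseq_of_bounded (Metric.isBounded_closedBall
        (x := (0 : EuclideanSpace ℝ (Fin n))) (r := C / η))
        (fun k => mem_closedBall_zero_iff.mpr (hbound k))
    have hkey : ∀ y : EuclideanSpace ℝ (Fin n), ⟪F y - b, y - a⟫ ≥ 0 := by
      intro y
      have hlim1 : Tendsto (fun j => Fm (ψ j) y) atTop (𝓝 (F y)) :=
        (hconv0 y).comp hψmono.tendsto_atTop
      have hlim : Tendsto (fun j => ⟪Fm (ψ j) y - b, y - x (ψ j)⟫) atTop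
          (𝓝 ⟪F y - b, y - a⟫) :=
        (hlim1.sub tendsto_const_nhds).inner (tendsto_const_nhds.sub hψa)
      refine ge_of_tendsto hlim (Eventually.of_forall fun j => ?_)
      have hm := hFm_mono (ψ j) y (x (ψ j))
      rw [hx (ψ j)] at hm
      nlinarith [sq_nonneg ‖y - x (ψ j)‖]
    refine ⟨a, ?_⟩
    have hv : ∀ v : EuclideanSpace ℝ (Fin n), ⟪F a - b, v⟫ ≥ 0 := by
      intro v
      have hcont2 : Continuous fun t : ℝ => ⟪F (a + t • v) - b, v⟫ :=
        ((hcont.comp (continuous_const.add (continuous_id.smul continuous_const))).sub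
          continuous_const).inner continuous_const
      have hlim : Tendsto (fun t : ℝ => ⟪F (a + t • v) - b, v⟫) (𝓝[>] 0)
          (𝓝 ⟪F a - b, v⟫) := by
        have := (hcont2.tendsto 0).mono_left (nhdsWithin_le_nhds (s := Set.Ioi (0:ℝ)))
        simpa using this
      refine ge_of_tendsto hlim ?_
      filter_upwards [self_mem_nhdsWithin] with t (ht : 0 < t)
      have hk := hkey (a + t • v)
      have he : (a + t • v) - a = t • v := by abel
      rw [he, real_inner_smul_right] at hk
      nlinarith
    have h1 := hv (b - F a)
    have h2 : ⟪F a - b, b - F a⟫ = -‖F a - b‖ ^ 2 := by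
      rw [show b - F a = -(F a - b) by abel, inner_neg_right,
        real_inner_self_eq_norm_sq]
    rw [h2] at h1
    have h3 : F a - b = 0 := by
      rw [← norm_eq_zero]
      nlinarith [sq_nonneg ‖F a - b‖, norm_nonneg (F a - b)]
    exact sub_eq_zero.mp h3
end

section
/- Let E = ℝⁿ and let F ⊆ E × E be a relation. Then F is maximally monotone (monotone with no proper monotone extension) if and only if both of the following hold: (1) for all (x₁, y₁), (x₂, y₂) ∈ F, ‖(x₁ − y₁) − (x₂ − y₂)‖ ≤ ‖(x₁ + y₁) − (x₂ + y₂)‖; and (2) for every a ∈ E there exist x, y ∈ E with (x, y) ∈ F and x + y = a. -/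
open RealInnerProductSpace

private abbrev Eu (n : ℕ) := EuclideanSpace ℝ (Fin n)

private lemma mono_expand {n : ℕ} (x₁ y₁ x₂ y₂ : Eu n) :
    ⟪y₁ - y₂, x₁ - x₂⟫ = ⟪x₁, y₁⟫ - ⟪x₁, y₂⟫ - ⟪x₂, y₁⟫ + ⟪x₂, y₂⟫ := by
  simp only [inner_sub_left, inner_sub_right]
  rw [real_inner_comm y₁ x₁, real_inner_comm y₁ x₂, real_inner_comm y₂ x₁,
    real_inner_comm y₂ x₂]
  ring

set_option maxHeartbeats 4000000 in
private theorem minty_zero {n : ℕ} (F : Set (Eu n × Eu n))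
    (hmono : ∀ p ∈ F, ∀ q ∈ F, 0 ≤ ⟪p.2 - q.2, p.1 - q.1⟫)
    (hmax : ∀ G : Set (Eu n × Eu n),
        (∀ p ∈ G, ∀ q ∈ G, 0 ≤ ⟪p.2 - q.2, p.1 - q.1⟫) → F ⊆ G → F = G) :
    ∃ x y : Eu n, (x, y) ∈ F ∧ x + y = 0 := by
  classical
  -- F is nonempty
  have hne : F.Nonempty := by
    by_contra h
    rw [Set.not_nonempty_iff_eq_empty] at h
    have h2 := hmax {((0 : Eu n), (0 : Eu n))}
      (by
        intro p hp q hq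
        simp only [Set.mem_singleton_iff] at hp hq
        subst hp; subst hq; simp)
      (by simp [h])
    rw [h] at h2
    exact Set.singleton_ne_empty _ h2.symm
  obtain ⟨⟨a₀, b₀⟩, hp₀⟩ := hne
  -- the epigraph of the Fitzpatrick function
  set S : Set ((Eu n × Eu n) × ℝ) :=
    {w | ∀ p ∈ F, ⟪w.1.1, p.2⟫ + ⟪p.1, w.1.2⟫ - ⟪p.1, p.2⟫ ≤ w.2} with hS
  set g : ((Eu n × Eu n) × ℝ) → ℝ :=
    fun w => w.2 + ‖w.1.1‖ ^ 2 / 2 + ‖w.1.2‖ ^ 2 / 2 with hg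
  set w₀ : (Eu n × Eu n) × ℝ := ((a₀, b₀), ⟪a₀, b₀⟫) with hw₀def
  set c : ℝ := g w₀ with hcdef
  have hcval : c = ⟪a₀, b₀⟫ + ‖a₀‖ ^ 2 / 2 + ‖b₀‖ ^ 2 / 2 := rfl
  set K : Set ((Eu n × Eu n) × ℝ) := S ∩ {w | g w ≤ c} with hK
  clear_value S g w₀ c K
  have hw₀S : w₀ ∈ S := by
    rw [hw₀def, hS]
    intro p hp
    have h1 := hmono p hp (a₀, b₀) hp₀
    rw [mono_expand] at h1
    show ⟪a₀, p.2⟫ + ⟪p.1, b₀⟫ - ⟪p.1, p.2⟫ ≤ ⟪a₀, b₀⟫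
    linarith
  have hw₀K : w₀ ∈ K := by
    rw [hK]
    refine ⟨hw₀S, ?_⟩
    show g w₀ ≤ c
    rw [hcdef]
  -- S is closed
  have hSclosed : IsClosed S := by
    have hrw : S = ⋂ p ∈ F,
        {w : (Eu n × Eu n) × ℝ | ⟪w.1.1, p.2⟫ + ⟪p.1, w.1.2⟫ - ⟪p.1, p.2⟫ ≤ w.2} := by
      ext w; simp [hS, Set.mem_iInter]
    rw [hrw]
    exact isClosed_biInter fun p hp => isClosed_le
      (((continuous_fst.fst.inner continuous_const).add
        (continuous_const.inner continuous_fst.snd)).sub continuous_const)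
      continuous_snd
  have hgcont : Continuous g := by
    rw [hg]
    apply Continuous.add
    apply Continuous.add continuous_snd
    · exact (continuous_fst.fst.norm.pow 2).div_const 2
    · exact (continuous_fst.snd.norm.pow 2).div_const 2
  -- K is bounded
  have hbdd : Bornology.IsBounded K := by
    rw [isBounded_iff_forall_norm_le]
    refine ⟨max (4 * (‖a₀‖ + ‖b₀‖ + 1) + 2 * abs (c + abs ⟪a₀, b₀⟫) + 2)
      ((‖a₀‖ + ‖b₀‖ + 1) * (4 * (‖a₀‖ + ‖b₀‖ + 1) + 2 * abs (c + abs ⟪a₀, b₀⟫) + 2)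
        + abs ⟪a₀, b₀⟫ + abs c), ?_⟩
    intro w hw
    rw [hK] at hw
    obtain ⟨hwS, hwg⟩ := hw
    obtain ⟨⟨x, y⟩, t⟩ := w
    rw [hS] at hwS
    have h1 : ⟪x, b₀⟫ + ⟪a₀, y⟫ - ⟪a₀, b₀⟫ ≤ t := hwS (a₀, b₀) hp₀
    rw [hcval] at hwg
    simp only [hg] at hwg
    have h2 : t + ‖x‖ ^ 2 / 2 + ‖y‖ ^ 2 / 2 ≤ ⟪a₀, b₀⟫ + ‖a₀‖ ^ 2 / 2 + ‖b₀‖ ^ 2 / 2 := hwg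
    -- work with opaque names for the constants
    obtain ⟨M, hM⟩ : ∃ M : ℝ, M = ‖a₀‖ + ‖b₀‖ + 1 := ⟨_, rfl⟩
    obtain ⟨C₀, hC₀⟩ : ∃ C₀ : ℝ, C₀ = c + |⟪a₀, b₀⟫| := ⟨_, rfl⟩
    obtain ⟨Rxy, hRxy⟩ : ∃ R : ℝ, R = 4 * M + 2 * |C₀| + 2 := ⟨_, rfl⟩
    obtain ⟨cc, hcc⟩ : ∃ cc : ℝ, cc = ⟪a₀, b₀⟫ + ‖a₀‖ ^ 2 / 2 + ‖b₀‖ ^ 2 / 2 := ⟨_, rfl⟩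
    have hccc : c = cc := by rw [hcval, hcc]
    rw [← hcc] at h2
    have hgoal : max Rxy (M * Rxy + |⟪a₀, b₀⟫| + |c|)
        = max (4 * (‖a₀‖ + ‖b₀‖ + 1) + 2 * abs (c + abs ⟪a₀, b₀⟫) + 2)
          ((‖a₀‖ + ‖b₀‖ + 1) * (4 * (‖a₀‖ + ‖b₀‖ + 1) + 2 * abs (c + abs ⟪a₀, b₀⟫) + 2)
            + abs ⟪a₀, b₀⟫ + abs c) := by rw [hRxy, hM, hC₀]
    rw [← hgoal]
    have hM1 : 1 ≤ M := by
      have := norm_nonneg a₀; have := norm_nonneg b₀; rw [hM]; linarith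
    have habsC : C₀ ≤ |C₀| := le_abs_self C₀
    have habsC0 : (0:ℝ) ≤ |C₀| := abs_nonneg C₀
    have hRxy0 : (0:ℝ) ≤ Rxy := by rw [hRxy]; linarith
    have cs1 := abs_le.mp (abs_real_inner_le_norm x b₀)
    have cs2 := abs_le.mp (abs_real_inner_le_norm a₀ y)
    have hx0 : (0:ℝ) ≤ ‖x‖ := norm_nonneg x
    have hy0 : (0:ℝ) ≤ ‖y‖ := norm_nonneg y
    have ha0 : (0:ℝ) ≤ ‖a₀‖ := norm_nonneg a₀
    have hb0 : (0:ℝ) ≤ ‖b₀‖ := norm_nonneg b₀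
    have habsab := le_abs_self ⟪a₀, b₀⟫
    have habsab' := neg_abs_le ⟪a₀, b₀⟫
    have e1 : ‖x‖ * ‖b₀‖ ≤ M * ‖x‖ := by rw [hM]; nlinarith
    have e2 : ‖a₀‖ * ‖y‖ ≤ M * ‖y‖ := by rw [hM]; nlinarith
    have hcC : cc + |⟪a₀, b₀⟫| ≤ C₀ := by
      rw [hC₀, hccc]
    -- key quadratic bound
    have hkey : ‖x‖ ^ 2 / 2 + ‖y‖ ^ 2 / 2 ≤ C₀ + M * ‖x‖ + M * ‖y‖ := by
      have ht : -(‖x‖ * ‖b₀‖) - ‖a₀‖ * ‖y‖ - ⟪a₀, b₀⟫ ≤ t := by linarith [cs1.1, cs2.1]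
      linarith
    have hsum : ‖x‖ + ‖y‖ ≤ Rxy := by
      rw [hRxy]
      by_contra hcon
      push_neg at hcon
      nlinarith [sq_nonneg (‖x‖ - ‖y‖), sq_nonneg (‖x‖ + ‖y‖)]
    have hxR : ‖x‖ ≤ Rxy := by linarith
    have hyR : ‖y‖ ≤ Rxy := by linarith
    have hx2 : (0:ℝ) ≤ ‖x‖ ^ 2 := sq_nonneg _
    have hy2 : (0:ℝ) ≤ ‖y‖ ^ 2 := sq_nonneg _
    have htup : t ≤ cc := by linarith
    have htlow : -(M * Rxy + |⟪a₀, b₀⟫|) ≤ t := by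
      have f1 : -(M * ‖x‖) ≤ ⟪x, b₀⟫ := by nlinarith [cs1.1]
      have f2 : -(M * ‖y‖) ≤ ⟪a₀, y⟫ := by nlinarith [cs2.1]
      have f3 : M * ‖x‖ + M * ‖y‖ ≤ M * Rxy := by nlinarith
      linarith
    rw [Prod.norm_def, Prod.norm_def, Real.norm_eq_abs]
    apply max_le
    · exact max_le (le_max_of_le_left hxR) (le_max_of_le_left hyR)
    · apply le_max_of_le_right
      rw [abs_le]
      have hMR : (0:ℝ) ≤ M * Rxy := mul_nonneg (by linarith) hRxy0
      have habc : -|c| ≤ cc := by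
        have := neg_abs_le c; rw [← hccc]; exact this
      have habc' : cc ≤ |c| := by
        have := le_abs_self c; rw [← hccc]; exact this
      have hab0 : (0:ℝ) ≤ |⟪a₀, b₀⟫| := abs_nonneg _
      have hc0 : (0:ℝ) ≤ |c| := abs_nonneg _
      exact ⟨by linarith, by linarith⟩
  -- minimizer over K
  have hKclosed : IsClosed K := by
    rw [hK]
    exact hSclosed.inter (isClosed_le hgcont continuous_const)
  have hKcompact : IsCompact K :=
    Metric.isCompact_of_isClosed_isBounded hKclosed hbdd
  obtain ⟨wb, hwbK, hwbmin'⟩ := hKcompact.exists_isMinOn ⟨w₀, hw₀K⟩ hgcont.continuousOn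
  have hwbmin : ∀ w ∈ K, g wb ≤ g w := fun w hw => isMinOn_iff.mp hwbmin' w hw
  obtain ⟨⟨xb, yb⟩, tb⟩ := wb
  rw [hK] at hwbK
  have hwbS : ((xb, yb), tb) ∈ S := hwbK.1
  have hminS : ∀ w ∈ S,
      tb + ‖xb‖ ^ 2 / 2 + ‖yb‖ ^ 2 / 2 ≤ w.2 + ‖w.1.1‖ ^ 2 / 2 + ‖w.1.2‖ ^ 2 / 2 := by
    intro w hw
    have hgg : g (((xb, yb)), tb) ≤ g w := by
      by_cases hgw : g w ≤ c
      · exact hwbmin w (by rw [hK]; exact ⟨hw, hgw⟩)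
      · push_neg at hgw
        calc g (((xb, yb)), tb) ≤ g w₀ := hwbmin w₀ hw₀K
          _ = c := hcdef.symm
          _ ≤ g w := hgw.le
    simpa only [hg] using hgg
  -- property (A)
  have hA : ∀ p ∈ F, ⟪xb, p.2⟫ + ⟪p.1, yb⟫ - ⟪p.1, p.2⟫ ≤ tb := by
    rw [hS] at hwbS; exact hwbS
  -- property (B) : tb ≥ ⟪xb, yb⟫, by maximality
  have hB : ⟪xb, yb⟫ ≤ tb := by
    by_contra hcon
    push_neg at hcon
    have hGmono : ∀ p ∈ insert (xb, yb) F, ∀ q ∈ insert (xb, yb) F,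
        0 ≤ ⟪p.2 - q.2, p.1 - q.1⟫ := by
      intro p hp q hq
      rcases Set.mem_insert_iff.mp hp with hp' | hp' <;>
        rcases Set.mem_insert_iff.mp hq with hq' | hq'
      · subst hp'; subst hq'; simp
      · subst hp'
        have h1 := hA q hq'
        rw [mono_expand]
        linarith
      · subst hq'
        have h1 := hA p hp'
        rw [mono_expand]
        linarith
      · exact hmono p hp' q hq'
    have hFeq := hmax _ hGmono (Set.subset_insert _ _)
    have hmem : (xb, yb) ∈ F := hFeq ▸ Set.mem_insert _ _
    have hAm := hA _ hmem
    simp only at hAm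
    linarith
  -- property (C) : optimality inequality
  have hC : ∀ p ∈ F, tb ≤ ⟪p.1, p.2⟫ + ⟪xb, p.1⟫ - ‖xb‖ ^ 2 + ⟪yb, p.2⟫ - ‖yb‖ ^ 2 := by
    intro p hp
    obtain ⟨A, hAdef⟩ : ∃ A : ℝ,
        A = ⟪p.1, p.2⟫ - tb + ⟪xb, p.1⟫ - ‖xb‖ ^ 2 + ⟪yb, p.2⟫ - ‖yb‖ ^ 2 := ⟨_, rfl⟩
    obtain ⟨B, hBdef⟩ : ∃ B : ℝ,
        B = ‖p.1 - xb‖ ^ 2 / 2 + ‖p.2 - yb‖ ^ 2 / 2 := ⟨_, rfl⟩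
    have hB0 : 0 ≤ B := by rw [hBdef]; positivity
    have hkey : ∀ s : ℝ, 0 < s → s ≤ 1 → 0 ≤ s * A + s ^ 2 * B := by
      intro s hs hs1
      have hwsS : ((xb + s • (p.1 - xb), yb + s • (p.2 - yb)),
          tb + s * (⟪p.1, p.2⟫ - tb)) ∈ S := by
        rw [hS]
        intro q hq
        have h1 := hA q hq
        have h2 := hmono p hp q hq
        rw [mono_expand] at h2
        show ⟪xb + s • (p.1 - xb), q.2⟫ + ⟪q.1, yb + s • (p.2 - yb)⟫ - ⟪q.1, q.2⟫
          ≤ tb + s * (⟪p.1, p.2⟫ - tb)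
        simp only [inner_add_left, inner_add_right, real_inner_smul_left,
          real_inner_smul_right, inner_sub_left, inner_sub_right]
        have m1 := mul_le_mul_of_nonneg_left h1 (by linarith : (0:ℝ) ≤ 1 - s)
        have m2 := mul_le_mul_of_nonneg_left h2 hs.le
        nlinarith
      have hle := hminS _ hwsS
      simp only at hle
      have e1 : ‖xb + s • (p.1 - xb)‖ ^ 2
          = ‖xb‖ ^ 2 + 2 * (s * (⟪xb, p.1⟫ - ‖xb‖ ^ 2)) + s ^ 2 * ‖p.1 - xb‖ ^ 2 := by
        rw [norm_add_sq_real, real_inner_smul_right, inner_sub_right,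
          real_inner_self_eq_norm_sq, norm_smul, mul_pow, Real.norm_eq_abs, sq_abs]
      have e2 : ‖yb + s • (p.2 - yb)‖ ^ 2
          = ‖yb‖ ^ 2 + 2 * (s * (⟪yb, p.2⟫ - ‖yb‖ ^ 2)) + s ^ 2 * ‖p.2 - yb‖ ^ 2 := by
        rw [norm_add_sq_real, real_inner_smul_right, inner_sub_right,
          real_inner_self_eq_norm_sq, norm_smul, mul_pow, Real.norm_eq_abs, sq_abs]
      rw [e1, e2] at hle
      rw [hAdef, hBdef]
      nlinarith [hle]
    -- let s → 0
    have hA0 : 0 ≤ A := by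
      by_contra hcon
      push_neg at hcon
      obtain ⟨s, hsdef⟩ : ∃ s : ℝ, s = min 1 (-A / (2 * B + 1)) := ⟨_, rfl⟩
      have hB1 : (0:ℝ) < 2 * B + 1 := by linarith
      have hspos : 0 < s := by
        rw [hsdef]
        exact lt_min one_pos (div_pos (by linarith) hB1)
      have hs1 : s ≤ 1 := hsdef ▸ min_le_left _ _
      have hsle : s ≤ -A / (2 * B + 1) := hsdef ▸ min_le_right _ _
      have hk := hkey s hspos hs1
      have hsB : s * (2 * B + 1) ≤ -A := by
        rw [← le_div_iff₀ hB1]; exact hsle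
      nlinarith [hk, mul_le_mul_of_nonneg_left hsB hspos.le, mul_pos hspos hspos,
        mul_pos_of_neg_of_neg hcon (neg_neg_of_pos hspos)]
    rw [hAdef] at hA0
    linarith
  -- the point (-yb, -xb) belongs to F
  have hsqsum : 0 ≤ ‖xb‖ ^ 2 + 2 * ⟪xb, yb⟫ + ‖yb‖ ^ 2 := by
    have hn := norm_add_sq_real xb yb
    nlinarith [sq_nonneg ‖xb + yb‖]
  have hkeyq : ∀ q ∈ F, 0 ≤ ⟪q.2 - (-xb), q.1 - (-yb)⟫ := by
    intro q hq
    have h1 := hC q hq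
    rw [mono_expand]
    simp only [inner_neg_right, inner_neg_left, neg_neg]
    have c1 := real_inner_comm q.1 xb
    have c2 := real_inner_comm yb xb
    linarith
  have hGmono : ∀ p ∈ insert (-yb, -xb) F, ∀ q ∈ insert (-yb, -xb) F,
      0 ≤ ⟪p.2 - q.2, p.1 - q.1⟫ := by
    intro p hp q hq
    rcases Set.mem_insert_iff.mp hp with hp' | hp' <;>
      rcases Set.mem_insert_iff.mp hq with hq' | hq'
    · subst hp'; subst hq'; simp
    · subst hp'
      have h1 := hkeyq q hq'
      rw [mono_expand] at h1 ⊢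
      simp only at h1 ⊢
      linarith
    · subst hq'
      exact hkeyq p hp'
    · exact hmono p hp' q hq'
  have hFeq := hmax _ hGmono (Set.subset_insert _ _)
  have hmem : (-yb, -xb) ∈ F := hFeq ▸ Set.mem_insert _ _
  -- conclude xb + yb = 0
  have h1 := hC _ hmem
  simp only [inner_neg_right, inner_neg_left, neg_neg] at h1
  have c2 := real_inner_comm yb xb
  have hzero : ‖xb + yb‖ ^ 2 ≤ 0 := by
    have hn := norm_add_sq_real xb yb
    nlinarith
  have hfin : xb + yb = 0 := by
    have h2 : ‖xb + yb‖ ^ 2 = 0 := le_antisymm hzero (sq_nonneg _)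
    have h3 : ‖xb + yb‖ = 0 := by
      nlinarith [norm_nonneg (xb + yb)]
    exact norm_eq_zero.mp h3
  exact ⟨-yb, -xb, hmem, by rw [show -yb + -xb = -(xb + yb) by abel, hfin, neg_zero]⟩

private lemma mono_shift {n : ℕ} (F : Set (Eu n × Eu n)) (v : Eu n)
    (h : ∀ p ∈ F, ∀ q ∈ F, 0 ≤ ⟪p.2 - q.2, p.1 - q.1⟫) :
    ∀ p ∈ (fun p : Eu n × Eu n => (p.1, p.2 + v)) '' F,
      ∀ q ∈ (fun p : Eu n × Eu n => (p.1, p.2 + v)) '' F, 0 ≤ ⟪p.2 - q.2, p.1 - q.1⟫ := by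
  rintro p ⟨p', hp', rfl⟩ q ⟨q', hq', rfl⟩
  simp only
  have hpq := h p' hp' q' hq'
  have he : (p'.2 + v) - (q'.2 + v) = p'.2 - q'.2 := by abel
  rw [he]
  exact hpq

private theorem minty_all {n : ℕ} (F : Set (Eu n × Eu n))
    (hmono : ∀ p ∈ F, ∀ q ∈ F, 0 ≤ ⟪p.2 - q.2, p.1 - q.1⟫)
    (hmax : ∀ G : Set (Eu n × Eu n),
        (∀ p ∈ G, ∀ q ∈ G, 0 ≤ ⟪p.2 - q.2, p.1 - q.1⟫) → F ⊆ G → F = G)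
    (a : Eu n) : ∃ x y : Eu n, (x, y) ∈ F ∧ x + y = a := by
  classical
  set G : Set (Eu n × Eu n) := (fun p : Eu n × Eu n => (p.1, p.2 + -a)) '' F with hG
  have hGmono := mono_shift F (-a) hmono
  have hGmax : ∀ H : Set (Eu n × Eu n),
      (∀ p ∈ H, ∀ q ∈ H, 0 ≤ ⟪p.2 - q.2, p.1 - q.1⟫) → G ⊆ H → G = H := by
    intro H hHmono hGH
    have hH'mono := mono_shift H a hHmono
    have hFH' : F ⊆ (fun p : Eu n × Eu n => (p.1, p.2 + a)) '' H := by
      intro p hp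
      refine ⟨(p.1, p.2 + -a), hGH ⟨p, hp, rfl⟩, ?_⟩
      simp only
      rw [show p.2 + -a + a = p.2 from by abel]
    have hFeq := hmax _ hH'mono hFH'
    apply Set.Subset.antisymm hGH
    intro q hq
    have hq' : (q.1, q.2 + a) ∈ F := by
      rw [hFeq]
      exact ⟨q, hq, rfl⟩
    refine ⟨(q.1, q.2 + a), hq', ?_⟩
    simp only
    rw [show q.2 + a + -a = q.2 from by abel]
  obtain ⟨x, y, hxyG, hsum⟩ := minty_zero G hGmono hGmax
  obtain ⟨p, hpF, hpe⟩ := hxyG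
  have h1 : p.1 = x := congrArg Prod.fst hpe
  have h2 : p.2 + -a = y := congrArg Prod.snd hpe
  refine ⟨x, y + a, ?_, ?_⟩
  · have : p = (x, y + a) := by
      rw [Prod.ext_iff]
      refine ⟨h1, ?_⟩
      simp only
      rw [← h2]; abel
    rw [← this]; exact hpF
  · rw [show x + (y + a) = (x + y) + a from by abel, hsum, zero_add]

private lemma cayley_id {n : ℕ} (p q : Eu n × Eu n) :
    ‖(p.1 + p.2) - (q.1 + q.2)‖ ^ 2 - ‖(p.1 - p.2) - (q.1 - q.2)‖ ^ 2
      = 4 * ⟪p.2 - q.2, p.1 - q.1⟫ := by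
  have e1 : (p.1 + p.2) - (q.1 + q.2) = (p.1 - q.1) + (p.2 - q.2) := by abel
  have e2 : (p.1 - p.2) - (q.1 - q.2) = (p.1 - q.1) - (p.2 - q.2) := by abel
  rw [e1, e2, norm_add_sq_real, norm_sub_sq_real (p.1 - q.1) (p.2 - q.2), real_inner_comm (p.2 - q.2) (p.1 - q.1)]
  ring

/-- A relation `F ⊆ ℝⁿ × ℝⁿ` is maximally monotone if and only if its Cayley
operator is a 1-Lipschitz function defined on all of `ℝⁿ`. -/
theorem maximally_monotone_iff_cayley_one_lipschitz_total
    (n : ℕ) (F : Set (EuclideanSpace ℝ (Fin n) × EuclideanSpace ℝ (Fin n))) :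
    ((∀ p ∈ F, ∀ q ∈ F, 0 ≤ ⟪p.2 - q.2, p.1 - q.1⟫) ∧
      ∀ G : Set (EuclideanSpace ℝ (Fin n) × EuclideanSpace ℝ (Fin n)),
        (∀ p ∈ G, ∀ q ∈ G, 0 ≤ ⟪p.2 - q.2, p.1 - q.1⟫) → F ⊆ G → F = G) ↔
    ((∀ p ∈ F, ∀ q ∈ F,
        ‖(p.1 - p.2) - (q.1 - q.2)‖ ≤ ‖(p.1 + p.2) - (q.1 + q.2)‖) ∧
      ∀ a : EuclideanSpace ℝ (Fin n),
        ∃ x y : EuclideanSpace ℝ (Fin n), (x, y) ∈ F ∧ x + y = a) := by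
  constructor
  · rintro ⟨hmono, hmax⟩
    constructor
    · intro p hp q hq
      have h := hmono p hp q hq
      have hid := cayley_id p q
      nlinarith [norm_nonneg ((p.1 - p.2) - (q.1 - q.2)),
        norm_nonneg ((p.1 + p.2) - (q.1 + q.2))]
    · intro a
      exact minty_all F hmono hmax a
  · rintro ⟨hlip, hsurj⟩
    have hmono : ∀ p ∈ F, ∀ q ∈ F, 0 ≤ ⟪p.2 - q.2, p.1 - q.1⟫ := by
      intro p hp q hq
      have h := hlip p hp q hq
      have hid := cayley_id p q
      nlinarith [norm_nonneg ((p.1 - p.2) - (q.1 - q.2)),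
        norm_nonneg ((p.1 + p.2) - (q.1 + q.2))]
    refine ⟨hmono, ?_⟩
    intro G hG hFG
    apply Set.Subset.antisymm hFG
    intro p hpG
    obtain ⟨x, y, hxyF, hsum⟩ := hsurj (p.1 + p.2)
    have h := hG p hpG (x, y) (hFG hxyF)
    have h0 : p.1 - x = -(p.2 - y) := by
      rw [eq_neg_iff_add_eq_zero,
        show p.1 - x + (p.2 - y) = p.1 + p.2 - (x + y) from by abel, ← hsum, sub_self]
    simp only at h
    rw [h0, inner_neg_right] at h
    have h2 : ⟪p.2 - y, p.2 - y⟫ = 0 :=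
      le_antisymm (by linarith) real_inner_self_nonneg
    have h3 : p.2 - y = 0 := inner_self_eq_zero.mp h2
    have h4 : p.2 = y := sub_eq_zero.mp h3
    have h5 : p.1 = x := by
      have := h0
      rw [h3, neg_zero] at this
      exact sub_eq_zero.mp this
    have : p = (x, y) := Prod.ext_iff.mpr ⟨h5, h4⟩
    rw [this]
    exact hxyF
end

section
/- Let E = ℝⁿ, let 0 ≤ L < 1, and let G : E → E be L-Lipschitz. Then there exists a unique function F : E → E satisfying x − F x = G(x + F x) for all x ∈ E, and this F is bijective. -/
lemma contraction_existsUnique {n : ℕ} {L : ℝ} (hL0 : 0 ≤ L) (hL1 : L < 1)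
    (φ : EuclideanSpace ℝ (Fin n) → EuclideanSpace ℝ (Fin n))
    (hφ : ∀ x y, ‖φ x - φ y‖ ≤ L * ‖x - y‖) : ∃! z, φ z = z := by
  have hc : ContractingWith ⟨L, hL0⟩ φ := by
    constructor
    · exact_mod_cast hL1
    · apply LipschitzWith.of_dist_le_mul
      intro x y
      rw [dist_eq_norm, dist_eq_norm]; exact hφ x y
  exact ⟨ContractingWith.fixedPoint φ hc, hc.fixedPoint_isFixedPt,
    fun z hz => hc.fixedPoint_unique hz⟩

/-- For each `L`-Lipschitz `G : ℝⁿ → ℝⁿ` with `0 ≤ L < 1`, there is a unique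
function `F` satisfying `x - F x = G (x + F x)` for all `x` (the monotone
formulation of `G`), and this `F` is bijective. -/
theorem monotone_formulation_exists_unique_bijective
    (n : ℕ) (L : ℝ) (hL0 : 0 ≤ L) (hL1 : L < 1)
    (G : EuclideanSpace ℝ (Fin n) → EuclideanSpace ℝ (Fin n))
    (hG : ∀ x y, ‖G x - G y‖ ≤ L * ‖x - y‖) :
    (∃! F : EuclideanSpace ℝ (Fin n) → EuclideanSpace ℝ (Fin n),
        ∀ x, x - F x = G (x + F x)) ∧
      ∀ F : EuclideanSpace ℝ (Fin n) → EuclideanSpace ℝ (Fin n),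
        (∀ x, x - F x = G (x + F x)) → Function.Bijective F := by
  -- for each x, unique z with 2x - G z = z
  have key : ∀ x : EuclideanSpace ℝ (Fin n), ∃! z, (x + x) - G z = z := by
    intro x
    apply contraction_existsUnique hL0 hL1
    intro a b
    have h : ((x + x) - G a) - ((x + x) - G b) = G b - G a := by abel
    rw [h]
    calc ‖G b - G a‖ ≤ L * ‖b - a‖ := hG b a
      _ = L * ‖a - b‖ := by rw [norm_sub_rev]
  choose z hz hzuniq using key
  constructor
  · refine ⟨fun x => z x - x, ?_, ?_⟩
    · intro x
      have h : x + x - G (z x) = z x := hz x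
      rw [sub_eq_iff_eq_add] at h
      have hG1 : G (z x) = x + x - z x := by rw [h]; abel
      have h3 : x + (z x - x) = z x := by abel
      show x - (z x - x) = G (x + (z x - x))
      rw [h3, hG1]; abel
    · intro F hF
      funext x
      have h1 := hF x
      have h2 : (x + x) - G (x + F x) = x + F x := by rw [← h1]; abel
      have h3 : x + F x = z x := hzuniq x _ h2
      rw [← h3]; abel
  · intro F hF
    constructor
    · intro a b hab
      have ha := hF a
      have hb := hF b
      rw [hab] at ha
      have hsub : a - b = G (a + F b) - G (b + F b) := by
        rw [← ha, ← hb]; abel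
      have hn : ‖a - b‖ ≤ L * ‖a - b‖ := by
        have h4 : (a + F b) - (b + F b) = a - b := by abel
        calc ‖a - b‖ = ‖G (a + F b) - G (b + F b)‖ := by rw [hsub]
          _ ≤ L * ‖(a + F b) - (b + F b)‖ := hG _ _
          _ = L * ‖a - b‖ := by rw [h4]
      have h0 : ‖a - b‖ = 0 := by nlinarith [norm_nonneg (a - b)]
      exact norm_sub_eq_zero_iff.mp h0
    · intro y
      obtain ⟨x, hx, -⟩ := contraction_existsUnique hL0 hL1
        (fun x => y + G (x + y)) (by
          intro a b
          have h : (y + G (a + y)) - (y + G (b + y)) = G (a + y) - G (b + y) := by abel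
          rw [h]
          have h2 : (a + y) - (b + y) = a - b := by abel
          calc ‖G (a + y) - G (b + y)‖ ≤ L * ‖(a + y) - (b + y)‖ := hG _ _
            _ = L * ‖a - b‖ := by rw [h2])
      refine ⟨x, ?_⟩
      have hGxy : G (x + y) = x - y := eq_sub_of_add_eq' hx
      have hxy : (x + x) - G (x + y) = x + y := by rw [hGxy]; abel
      have hxF : (x + x) - G (x + F x) = x + F x := by rw [← hF x]; abel
      have hthis : x + y = x + F x := (hzuniq x _ hxy).trans (hzuniq x _ hxF).symm
      exact (add_left_cancel hthis).symm
end

section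
/- Let E = ℝⁿ, let 0 ≤ L < 1, and let G : E → E be L-Lipschitz. Suppose (x₁, y₁) and (x₂, y₂) in E × E satisfy x₁ − y₁ = G(x₁ + y₁) and x₂ − y₂ = G(x₂ + y₂). Then ⟪y₁ − y₂, x₁ − x₂⟫ ≥ ((1 − L)/(1 + L))‖x₁ − x₂‖². In particular, the monotone formulation of G is ((1 − L)/(1 + L))-strongly monotone. -/
open RealInnerProductSpace

lemma aux_real (L a b t : ℝ) (hL0 : 0 ≤ L) (hL1 : L < 1)
    (ha : 0 ≤ a) (hb : 0 ≤ b) (hcs : t * t ≤ a * b)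
    (hkey : (1 - L^2) * (a + b) ≤ 2 * (1 + L^2) * t) :
    t ≥ (1 - L) / (1 + L) * a := by
  have h1 : 0 < 1 + L := by linarith
  rw [ge_iff_le, div_mul_eq_mul_div, div_le_iff₀ h1]
  rcases eq_or_lt_of_le ha with h | hpos
  · have ht : t = 0 := by nlinarith [mul_self_nonneg t]
    simp [← h, ht]
  · -- multiply hkey by a and use Cauchy-Schwarz
    have hq : (1 - L^2) * (a*a + t*t) ≤ 2 * (1 + L^2) * t * a := by
      have h2 : (0:ℝ) ≤ 1 - L^2 := by nlinarith
      nlinarith [mul_le_mul_of_nonneg_right hkey ha, mul_le_mul_of_nonneg_left hcs h2]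
    -- factorization: ((1+L)t - (1-L)a)((1-L)t - (1+L)a) ≤ 0
    by_contra hc
    push_neg at hc
    have hQ : (1-L)*t - (1+L)*a ≥ 0 := by nlinarith
    nlinarith

/-- The monotone operator whose Cayley operator is an `L`-Lipschitz function `G`
(`0 ≤ L < 1`) is `((1 - L)/(1 + L))`-strongly monotone. -/
theorem monotone_formulation_strongly_monotone
    (n : ℕ) (L : ℝ) (hL0 : 0 ≤ L) (hL1 : L < 1)
    (G : EuclideanSpace ℝ (Fin n) → EuclideanSpace ℝ (Fin n))
    (hG : ∀ x y, ‖G x - G y‖ ≤ L * ‖x - y‖)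
    (x₁ y₁ x₂ y₂ : EuclideanSpace ℝ (Fin n))
    (h₁ : x₁ - y₁ = G (x₁ + y₁)) (h₂ : x₂ - y₂ = G (x₂ + y₂)) :
    ⟪y₁ - y₂, x₁ - x₂⟫ ≥ ((1 - L) / (1 + L)) * ‖x₁ - x₂‖ ^ 2 := by
  set u := x₁ - x₂ with hu
  set v := y₁ - y₂ with hv
  have hle : ‖u - v‖ ≤ L * ‖u + v‖ := by
    have h := hG (x₁ + y₁) (x₂ + y₂)
    have e1 : (x₁ - y₁) - (x₂ - y₂) = u - v := by rw [hu, hv]; abel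
    have e2 : (x₁ + y₁) - (x₂ + y₂) = u + v := by rw [hu, hv]; abel
    rw [← h₁, ← h₂, e1, e2] at h
    exact h
  have hsq : ‖u - v‖^2 ≤ L^2 * ‖u + v‖^2 := by
    have := mul_self_le_mul_self (norm_nonneg _) hle
    nlinarith [norm_nonneg (u - v), norm_nonneg (u + v)]
  have expand1 : ‖u - v‖^2 = ‖u‖^2 - 2 * ⟪u, v⟫ + ‖v‖^2 := by
    rw [norm_sub_sq_real]
  have expand2 : ‖u + v‖^2 = ‖u‖^2 + 2 * ⟪u, v⟫ + ‖v‖^2 := by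
    rw [norm_add_sq_real]
  have hkey : (1 - L^2) * (‖u‖^2 + ‖v‖^2) ≤ 2 * (1 + L^2) * ⟪u, v⟫ := by
    rw [expand1, expand2] at hsq; nlinarith
  have hcs : ⟪u, v⟫ * ⟪u, v⟫ ≤ ‖u‖^2 * ‖v‖^2 := by
    have := real_inner_mul_inner_self_le u v
    rwa [real_inner_self_eq_norm_sq, real_inner_self_eq_norm_sq] at this
  have := aux_real L (‖u‖^2) (‖v‖^2) (⟪u, v⟫) hL0 hL1 (sq_nonneg _) (sq_nonneg _) hcs hkey
  rwa [real_inner_comm]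
end

section
/- Let E = ℝⁿ, let 0 ≤ L < 1, and let G : E → E be L-Lipschitz. Suppose (x₁, y₁) and (x₂, y₂) in E × E satisfy x₁ − y₁ = G(x₁ + y₁) and x₂ − y₂ = G(x₂ + y₂). Then ‖y₁ − y₂‖ ≤ ((1 + L)/(1 − L))‖x₁ − x₂‖. In particular, the monotone formulation of G is ((1 + L)/(1 − L))-Lipschitz. -/
/-- The monotone operator whose Cayley operator is an `L`-Lipschitz function `G`
(`0 ≤ L < 1`) is `((1 + L)/(1 - L))`-Lipschitz. -/
theorem monotone_formulation_lipschitz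
    (n : ℕ) (L : ℝ) (hL0 : 0 ≤ L) (hL1 : L < 1)
    (G : EuclideanSpace ℝ (Fin n) → EuclideanSpace ℝ (Fin n))
    (hG : ∀ x y, ‖G x - G y‖ ≤ L * ‖x - y‖)
    (x₁ y₁ x₂ y₂ : EuclideanSpace ℝ (Fin n))
    (h₁ : x₁ - y₁ = G (x₁ + y₁)) (h₂ : x₂ - y₂ = G (x₂ + y₂)) :
    ‖y₁ - y₂‖ ≤ ((1 + L) / (1 - L)) * ‖x₁ - x₂‖ := by
  set a := x₁ - x₂
  set b := y₁ - y₂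
  have key : ‖a - b‖ ≤ L * ‖a + b‖ := by
    have : a - b = G (x₁ + y₁) - G (x₂ + y₂) := by
      rw [← h₁, ← h₂]; simp [a, b]; abel
    rw [this]
    have := hG (x₁ + y₁) (x₂ + y₂)
    have he : (x₁ + y₁) - (x₂ + y₂) = a + b := by simp [a, b]; abel
    rwa [he] at this
  have hb : ‖b‖ ≤ ‖a - b‖ + ‖a‖ := by
    calc ‖b‖ = ‖a - (a - b)‖ := by congr 1; abel
    _ ≤ ‖a‖ + ‖a - b‖ := norm_sub_le _ _
    _ = ‖a - b‖ + ‖a‖ := by ring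
  have hab : ‖a + b‖ ≤ ‖a‖ + ‖b‖ := norm_add_le _ _
  have h1L : 0 < 1 - L := by linarith
  rw [div_mul_eq_mul_div, le_div_iff₀ h1L]
  nlinarith [norm_nonneg a, norm_nonneg b]
end

section
/- Let E = ℝⁿ, let 0 ≤ L < 1, and let p, q ∈ E. Then ‖p − q‖ ≤ L‖q‖ if and only if ‖(1 − L²)·q − p‖ ≤ L‖p‖. -/
/-- Vector identity underlying `I_L = (1/(1 - L²)) · R_L`: for `0 ≤ L < 1` and
`p, q ∈ ℝⁿ`, `‖p - q‖ ≤ L‖q‖ ↔ ‖(1 - L²) • q - p‖ ≤ L‖p‖`. -/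
theorem inverse_residual_rescaling_identity
    (n : ℕ) (L : ℝ) (hL0 : 0 ≤ L) (hL1 : L < 1)
    (p q : EuclideanSpace ℝ (Fin n)) :
    ‖p - q‖ ≤ L * ‖q‖ ↔ ‖(1 - L ^ 2) • q - p‖ ≤ L * ‖p‖ := by
  have hsq : ∀ a b : ℝ, 0 ≤ a → 0 ≤ b → (a ≤ b ↔ a ^ 2 ≤ b ^ 2) := fun a b ha hb =>
    (pow_le_pow_iff_left₀ ha hb two_ne_zero).symm
  have hLsq : 0 < 1 - L ^ 2 := by nlinarith
  rw [hsq _ _ (norm_nonneg _) (by positivity), hsq _ _ (norm_nonneg _) (by positivity),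
    norm_sub_sq_real, norm_sub_sq_real, real_inner_smul_left, norm_smul, mul_pow,
    Real.norm_eq_abs, abs_of_pos hLsq, real_inner_comm q p]
  constructor <;> intro h <;> nlinarith [mul_le_mul_of_nonneg_left h hLsq.le, sq_nonneg (L * ‖p‖), sq_nonneg (L * ‖q‖)]
end

section
/- Let E = ℝⁿ, let 0 ≤ L < 1, and let p, q ∈ E. Then ‖q − p‖ ≤ L‖q + p‖ if and only if ‖((1 − L²)/(1 + L²))·q − p‖ ≤ (2L/(1 + L²))·‖p‖. -/
lemma monres_aux (L x y i : ℝ) (h1 : (0:ℝ) < 1 + L ^ 2) (h2 : (0:ℝ) < 1 - L ^ 2) :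
    (y - 2 * i + x ≤ L ^ 2 * (y + 2 * i + x)) ↔
      (((1 - L ^ 2) / (1 + L ^ 2)) ^ 2 * y - 2 * ((1 - L ^ 2) / (1 + L ^ 2) * i) + x
        ≤ (2 * L / (1 + L ^ 2)) ^ 2 * x) := by
  have hne : (1 + L ^ 2) ≠ 0 := ne_of_gt h1
  rw [show (((1 - L ^ 2) / (1 + L ^ 2)) ^ 2 * y - 2 * ((1 - L ^ 2) / (1 + L ^ 2) * i) + x)
      = ((1 - L ^ 2) ^ 2 * y - 2 * ((1 - L ^ 2) * (1 + L ^ 2) * i) + (1 + L ^ 2) ^ 2 * x)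
        / (1 + L ^ 2) ^ 2 from by field_simp,
    show ((2 * L / (1 + L ^ 2)) ^ 2 * x) = (4 * L ^ 2 * x) / (1 + L ^ 2) ^ 2 from by
      rw [div_pow]; ring,
    div_le_div_iff_of_pos_right (by positivity)]
  constructor
  · intro h
    nlinarith [mul_pos h2 h2, mul_pos h2 h1]
  · intro h
    nlinarith [mul_pos h2 h2, mul_pos h2 h1]

/-- Vector identity underlying `M_L = ((1 + L²)/(1 - L²)) · R_{2L/(1+L²)}`: for
`0 ≤ L < 1` and `p, q ∈ ℝⁿ`,
`‖q - p‖ ≤ L‖q + p‖ ↔ ‖((1 - L²)/(1 + L²)) • q - p‖ ≤ (2L/(1 + L²))‖p‖`. -/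
theorem monotone_residual_rescaling_identity
    (n : ℕ) (L : ℝ) (hL0 : 0 ≤ L) (hL1 : L < 1)
    (p q : EuclideanSpace ℝ (Fin n)) :
    ‖q - p‖ ≤ L * ‖q + p‖ ↔
      ‖((1 - L ^ 2) / (1 + L ^ 2)) • q - p‖ ≤ (2 * L / (1 + L ^ 2)) * ‖p‖ := by
  have h1 : (0:ℝ) < 1 + L ^ 2 := by positivity
  have h2 : (0:ℝ) < 1 - L ^ 2 := by nlinarith
  rw [← pow_le_pow_iff_left₀ (norm_nonneg _) (by positivity) two_ne_zero,
      ← pow_le_pow_iff_left₀ (norm_nonneg _) (by positivity) two_ne_zero]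
  have e1 : ‖q - p‖ ^ 2 = ‖q‖ ^ 2 - 2 * (inner ℝ q p : ℝ) + ‖p‖ ^ 2 :=
    norm_sub_sq_real q p
  have e2 : ‖q + p‖ ^ 2 = ‖q‖ ^ 2 + 2 * (inner ℝ q p : ℝ) + ‖p‖ ^ 2 :=
    norm_add_sq_real q p
  have e3 : ‖((1 - L ^ 2) / (1 + L ^ 2)) • q - p‖ ^ 2
      = ((1 - L ^ 2) / (1 + L ^ 2)) ^ 2 * ‖q‖ ^ 2
        - 2 * ((1 - L ^ 2) / (1 + L ^ 2) * (inner ℝ q p : ℝ)) + ‖p‖ ^ 2 := by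
    rw [norm_sub_sq_real (((1 - L ^ 2) / (1 + L ^ 2)) • q) p, norm_smul,
      real_inner_smul_left]
    rw [Real.norm_eq_abs, abs_of_pos (show (0:ℝ) < (1 - L ^ 2) / (1 + L ^ 2) by positivity)]
    ring
  simp only [mul_pow, e1, e2, e3]
  exact monres_aux L (‖p‖ ^ 2) (‖q‖ ^ 2) (inner ℝ q p) h1 h2
end

section
/- Let E = ℝⁿ, let 0 ≤ L < 1, and let G : E → E be L-Lipschitz. Then the map H defined by H x = (−L²/(1 + L²))·x + (1/(1 + L²))·G x is Lipschitz with constant (2L/(1 + L²))·((1 + L)/2), and for 0 < L < 1 this constant is strictly less than 2L/(1 + L²). Consequently, if F = (1/(1 − L²))·(id + G) then ((1 − L²)/(1 + L²))·F − id is Lipschitz with constant strictly less than 2L/(1 + L²), so every function of the inverse residual formulation class I_L lies in the monotone formulation class M_L. -/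
open RealInnerProductSpace in
lemma key_sq (n : ℕ) (L : ℝ) (hL0 : 0 ≤ L) (hL1 : L < 1)
    (u v : EuclideanSpace ℝ (Fin n)) (hv : ‖v‖ ≤ L * ‖u‖) :
    ‖(L ^ 2) • u + v‖ ≤ L * ‖(2 - L ^ 2) • u + v‖ := by
  have ht : -(‖u‖ * ‖v‖) ≤ ⟪u, v⟫ := neg_le_of_abs_le (abs_real_inner_le_norm u v)
  have hu : (0:ℝ) ≤ ‖u‖ := norm_nonneg u
  have hvn : (0:ℝ) ≤ ‖v‖ := norm_nonneg v
  have h1 : (0:ℝ) ≤ 1 - L ^ 2 := by nlinarith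
  have h2 : (0:ℝ) ≤ ⟪u, v⟫ + ‖u‖ * ‖v‖ := by linarith
  have hsq : ‖(L ^ 2) • u + v‖ ^ 2 ≤ (L * ‖(2 - L ^ 2) • u + v‖) ^ 2 := by
    rw [mul_pow, norm_add_sq_real, norm_add_sq_real, norm_smul, norm_smul,
      real_inner_smul_left, real_inner_smul_left]
    rw [Real.norm_eq_abs, Real.norm_eq_abs, abs_of_nonneg (by positivity),
      abs_of_nonneg (by nlinarith)]
    nlinarith [mul_nonneg (mul_nonneg h1 (sq_nonneg L)) h2,
      mul_nonneg (mul_nonneg h1 (sub_nonneg.2 hv))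
        (show (0:ℝ) ≤ L * ‖u‖ + ‖v‖ + 2 * L ^ 2 * ‖u‖ by positivity),
      mul_nonneg h1 (mul_nonneg (show (0:ℝ) ≤ L ^ 2 * ‖u‖ ^ 2 * (3 + L) by positivity) (by linarith : (0:ℝ) ≤ 1 - L))]
  have := Real.sqrt_le_sqrt hsq
  rwa [Real.sqrt_sq (norm_nonneg _), Real.sqrt_sq (by positivity)] at this

/-- `I_L ⊆ M_L`: for `L`-Lipschitz `G` with `0 ≤ L < 1`, the map
`H x = (-L²/(1+L²)) • x + (1/(1+L²)) • G x` is Lipschitz with constant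
`(2L/(1+L²)) · ((1+L)/2)`, this constant is `< 2L/(1+L²)` when `0 < L`,
hence for `F = (1/(1-L²)) • (id + G)` the map `((1-L²)/(1+L²)) • F - id` is
Lipschitz with that constant and `F` lies in the monotone formulation class
`M_L`. -/
theorem inverse_residual_subset_monotone_formulation
    (n : ℕ) (L : ℝ) (hL0 : 0 ≤ L) (hL1 : L < 1)
    (G : EuclideanSpace ℝ (Fin n) → EuclideanSpace ℝ (Fin n))
    (hG : ∀ x y, ‖G x - G y‖ ≤ L * ‖x - y‖) :
    (∀ x y, ‖((-L ^ 2 / (1 + L ^ 2)) • x + (1 / (1 + L ^ 2)) • G x) -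
          ((-L ^ 2 / (1 + L ^ 2)) • y + (1 / (1 + L ^ 2)) • G y)‖ ≤
        (2 * L / (1 + L ^ 2)) * ((1 + L) / 2) * ‖x - y‖) ∧
    (0 < L → (2 * L / (1 + L ^ 2)) * ((1 + L) / 2) < 2 * L / (1 + L ^ 2)) ∧
    (∀ x y, ‖(((1 - L ^ 2) / (1 + L ^ 2)) • ((1 / (1 - L ^ 2)) • (x + G x)) - x) -
          (((1 - L ^ 2) / (1 + L ^ 2)) • ((1 / (1 - L ^ 2)) • (y + G y)) - y)‖ ≤
        (2 * L / (1 + L ^ 2)) * ((1 + L) / 2) * ‖x - y‖) ∧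
    (∀ x y, ‖((1 / (1 - L ^ 2)) • (x + G x) - (1 / (1 - L ^ 2)) • (y + G y)) - (x - y)‖ ≤
        L * ‖((1 / (1 - L ^ 2)) • (x + G x) - (1 / (1 - L ^ 2)) • (y + G y)) + (x - y)‖) := by
  have hc : (0:ℝ) < 1 + L ^ 2 := by positivity
  have hc' : (0:ℝ) < 1 - L ^ 2 := by nlinarith
  have hne : (1:ℝ) - L ^ 2 ≠ 0 := ne_of_gt hc'
  have hne' : (1:ℝ) + L ^ 2 ≠ 0 := ne_of_gt hc
  have part1 : ∀ x y, ‖((-L ^ 2 / (1 + L ^ 2)) • x + (1 / (1 + L ^ 2)) • G x) -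
          ((-L ^ 2 / (1 + L ^ 2)) • y + (1 / (1 + L ^ 2)) • G y)‖ ≤
        (2 * L / (1 + L ^ 2)) * ((1 + L) / 2) * ‖x - y‖ := by
    intro x y
    have heq : ((-L ^ 2 / (1 + L ^ 2)) • x + (1 / (1 + L ^ 2)) • G x) -
          ((-L ^ 2 / (1 + L ^ 2)) • y + (1 / (1 + L ^ 2)) • G y) =
        (-L ^ 2 / (1 + L ^ 2)) • (x - y) + (1 / (1 + L ^ 2)) • (G x - G y) := by
      module
    rw [heq]
    have e1 : ‖(-L ^ 2 / (1 + L ^ 2)) • (x - y)‖ = L ^ 2 / (1 + L ^ 2) * ‖x - y‖ := by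
      rw [norm_smul, Real.norm_eq_abs, abs_div, abs_neg, abs_of_nonneg (sq_nonneg L),
        abs_of_pos hc]
    have e2 : ‖(1 / (1 + L ^ 2)) • (G x - G y)‖ = 1 / (1 + L ^ 2) * ‖G x - G y‖ := by
      rw [norm_smul, Real.norm_eq_abs, abs_of_pos (by positivity)]
    refine (norm_add_le _ _).trans ?_
    rw [e1, e2]
    have hGxy := hG x y
    have hkey : (2 * L / (1 + L ^ 2)) * ((1 + L) / 2) =
        L ^ 2 / (1 + L ^ 2) + L * (1 / (1 + L ^ 2)) := by
      field_simp
      ring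
    rw [hkey]
    have := mul_le_mul_of_nonneg_left hGxy (le_of_lt (show (0:ℝ) < 1 / (1 + L ^ 2) by positivity))
    nlinarith [this]
  refine ⟨part1, ?_, ?_, ?_⟩
  · intro hLpos
    have hA : (0:ℝ) < 2 * L / (1 + L ^ 2) := by positivity
    nlinarith [mul_pos hA (show (0:ℝ) < (1 - L) / 2 by linarith)]
  · intro x y
    have heq : ∀ z, (((1 - L ^ 2) / (1 + L ^ 2)) • ((1 / (1 - L ^ 2)) • (z + G z)) - z) =
        (-L ^ 2 / (1 + L ^ 2)) • z + (1 / (1 + L ^ 2)) • G z := by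
      intro z
      match_scalars <;> field_simp <;> ring
    rw [heq x, heq y]
    exact part1 x y
  · intro x y
    have heq1 : (1 / (1 - L ^ 2)) • (x + G x) - (1 / (1 - L ^ 2)) • (y + G y) - (x - y) =
        (1 / (1 - L ^ 2)) • ((L ^ 2) • (x - y) + (G x - G y)) := by
      match_scalars <;> field_simp <;> ring
    have heq2 : (1 / (1 - L ^ 2)) • (x + G x) - (1 / (1 - L ^ 2)) • (y + G y) + (x - y) =
        (1 / (1 - L ^ 2)) • ((2 - L ^ 2) • (x - y) + (G x - G y)) := by
      match_scalars <;> field_simp <;> ring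
    rw [heq1, heq2, norm_smul, norm_smul, mul_left_comm]
    exact mul_le_mul_of_nonneg_left (key_sq n L hL0 hL1 (x - y) (G x - G y) (hG x y))
      (norm_nonneg _)
end

section
/- Let E = ℝⁿ with n ≥ 1 and let 0 < L < 1. Define F : E → E by F x = ((1 + L)/(1 − L))·x. Then: (a) for all x, x − F x = −L·(x + F x), so F is the monotone formulation of the L-Lipschitz map G x = −L·x and satisfies ‖(F x₁ − F x₂) − (x₁ − x₂)‖ ≤ L‖(F x₁ − F x₂) + (x₁ − x₂)‖ for all x₁, x₂ (membership in M_L); (b) F − id is not L-Lipschitz (its Lipschitz constant is 2L/(1 − L) > L), so F ∉ R_L; and (c) (1 − L²)·F − id is not L-Lipschitz (its Lipschitz constant is 2L + L² > L), so F ∉ I_L. Hence the inclusions R_L ⊊ M_L and I_L ⊊ M_L are strict. -/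
/-- The map `F x = ((1+L)/(1-L)) • x` on `ℝⁿ` (`n ≥ 1`, `0 < L < 1`) is the
monotone formulation of `G x = -L • x` and lies in `M_L`, but `F - id` is not
`L`-Lipschitz (so `F ∉ R_L`) and `(1 - L²) • F - id` is not `L`-Lipschitz
(so `F ∉ I_L`); hence `R_L ⊊ M_L` and `I_L ⊊ M_L`. -/
theorem strict_inclusion_witness
    (n : ℕ) (hn : 1 ≤ n) (L : ℝ) (hL0 : 0 < L) (hL1 : L < 1)
    (F : EuclideanSpace ℝ (Fin n) → EuclideanSpace ℝ (Fin n))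
    (hF : ∀ x, F x = ((1 + L) / (1 - L)) • x) :
    (∀ x, x - F x = (-L) • (x + F x)) ∧
    (∀ x₁ x₂, ‖(F x₁ - F x₂) - (x₁ - x₂)‖ ≤ L * ‖(F x₁ - F x₂) + (x₁ - x₂)‖) ∧
    ¬(∀ x y, ‖(F x - x) - (F y - y)‖ ≤ L * ‖x - y‖) ∧
    ¬(∀ x y, ‖((1 - L ^ 2) • F x - x) - ((1 - L ^ 2) • F y - y)‖ ≤ L * ‖x - y‖) := by
  set c : ℝ := (1 + L) / (1 - L) with hc
  have h1L : (1 : ℝ) - L ≠ 0 := by linarith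
  have hc1 : c - 1 = 2 * L / (1 - L) := by rw [hc]; field_simp; ring
  have hcp1 : c + 1 = 2 / (1 - L) := by rw [hc]; field_simp; ring
  have e : EuclideanSpace ℝ (Fin n) := EuclideanSpace.single ⟨0, hn⟩ 1
  have he : ‖(EuclideanSpace.single (⟨0, hn⟩ : Fin n) (1:ℝ) : EuclideanSpace ℝ (Fin n))‖ = 1 := by
    rw [EuclideanSpace.norm_single]; norm_num
  refine ⟨?_, ?_, ?_, ?_⟩
  · intro x
    rw [hF]
    have h1 : x - c • x = ((1:ℝ) - c) • x := by module
    have h2 : (1:ℝ) - c = -L * (1 + c) := by rw [hc]; field_simp; ring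
    rw [h1, h2]; module
  · intro x y
    rw [hF, hF]
    have h1 : c • x - c • y - (x - y) = (c - 1) • (x - y) := by module
    have h2 : c • x - c • y + (x - y) = (c + 1) • (x - y) := by module
    rw [h1, h2, norm_smul, norm_smul, Real.norm_eq_abs, Real.norm_eq_abs,
      hc1, hcp1, abs_of_nonneg (by apply div_nonneg <;> linarith),
      abs_of_nonneg (by apply div_nonneg <;> linarith)]
    apply le_of_eq
    field_simp
  · intro h
    have := h (EuclideanSpace.single ⟨0, hn⟩ 1) 0
    rw [hF, hF, smul_zero] at this
    have h1 : c • (EuclideanSpace.single (⟨0, hn⟩ : Fin n) (1:ℝ)) -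
        EuclideanSpace.single (⟨0, hn⟩ : Fin n) (1:ℝ) - ((0:EuclideanSpace ℝ (Fin n)) - 0)
        = (c - 1) • EuclideanSpace.single (⟨0, hn⟩ : Fin n) (1:ℝ) := by module
    rw [h1, norm_smul, Real.norm_eq_abs, sub_zero, he,
      abs_of_nonneg (by rw [hc1]; apply div_nonneg <;> linarith)] at this
    rw [hc1, mul_one, mul_one, div_le_iff₀ (by linarith : (0:ℝ) < 1 - L)] at this
    nlinarith
  · intro h
    have := h (EuclideanSpace.single ⟨0, hn⟩ 1) 0
    rw [hF, hF, smul_zero, smul_zero] at this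
    have hcc : (1 - L ^ 2) * c = (1 + L) ^ 2 := by
      rw [hc]; field_simp; ring
    have h1 : (1 - L ^ 2) • (c • (EuclideanSpace.single (⟨0, hn⟩ : Fin n) (1:ℝ))) -
        EuclideanSpace.single (⟨0, hn⟩ : Fin n) (1:ℝ) - ((0:EuclideanSpace ℝ (Fin n)) - 0)
        = ((1 - L ^ 2) * c - 1) • EuclideanSpace.single (⟨0, hn⟩ : Fin n) (1:ℝ) := by module
    rw [h1, norm_smul, Real.norm_eq_abs, sub_zero, he, hcc] at this
    have habs : |(1 + L) ^ 2 - 1| = (1 + L) ^ 2 - 1 := abs_of_nonneg (by nlinarith)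
    rw [habs] at this
    nlinarith
end

section
/- Let E = ℝⁿ, let 0 < K ≤ 1, and let F : E → E be K-strongly monotone and (1/K)-Lipschitz. Set L₀ = sqrt((1 + K² − 2K³)/(1 + K² + 2K³)). Then L₀ < 1, and for every L with L₀ ≤ L < 1 and all x₁, x₂ ∈ E, writing p = x₁ − x₂ and q = F x₁ − F x₂, one has ‖q − p‖ ≤ L‖q + p‖. In particular F belongs to the monotone formulation class M_L for some L < 1. -/
open RealInnerProductSpace

/-- A `K`-strongly monotone, `(1/K)`-Lipschitz map (`0 < K ≤ 1`) belongs to the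
monotone formulation class `M_L` for every `L` with
`√((1 + K² - 2K³)/(1 + K² + 2K³)) ≤ L < 1`, and this threshold is `< 1`. -/
theorem strongly_monotone_lipschitz_mem_monotone_formulation
    (n : ℕ) (K : ℝ) (hK0 : 0 < K) (hK1 : K ≤ 1)
    (F : EuclideanSpace ℝ (Fin n) → EuclideanSpace ℝ (Fin n))
    (hmono : ∀ x y, ⟪F x - F y, x - y⟫ ≥ K * ‖x - y‖ ^ 2)
    (hlip : ∀ x y, ‖F x - F y‖ ≤ (1 / K) * ‖x - y‖) :
    Real.sqrt ((1 + K ^ 2 - 2 * K ^ 3) / (1 + K ^ 2 + 2 * K ^ 3)) < 1 ∧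
    ∀ L : ℝ, Real.sqrt ((1 + K ^ 2 - 2 * K ^ 3) / (1 + K ^ 2 + 2 * K ^ 3)) ≤ L → L < 1 →
      ∀ x₁ x₂, ‖(F x₁ - F x₂) - (x₁ - x₂)‖ ≤ L * ‖(F x₁ - F x₂) + (x₁ - x₂)‖ := by
  have hD : (0:ℝ) < 1 + K ^ 2 + 2 * K ^ 3 := by positivity
  have hN : (0:ℝ) ≤ 1 + K ^ 2 - 2 * K ^ 3 := by nlinarith [sq_nonneg (1 - K^2), sq_nonneg (K - K^2)]
  have hfrac : (1 + K ^ 2 - 2 * K ^ 3) / (1 + K ^ 2 + 2 * K ^ 3) < 1 := by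
    rw [div_lt_one hD]; nlinarith [pow_pos hK0 3]
  have hfrac0 : (0:ℝ) ≤ (1 + K ^ 2 - 2 * K ^ 3) / (1 + K ^ 2 + 2 * K ^ 3) := by positivity
  have hlt1 : Real.sqrt ((1 + K ^ 2 - 2 * K ^ 3) / (1 + K ^ 2 + 2 * K ^ 3)) < 1 := by
    have := Real.sqrt_lt_sqrt hfrac0 hfrac
    simpa using this
  refine ⟨hlt1, ?_⟩
  intro L hL0 hL1 x₁ x₂
  have hLnn : 0 ≤ L := le_trans (Real.sqrt_nonneg _) hL0
  have hL2 : (1 + K ^ 2 - 2 * K ^ 3) / (1 + K ^ 2 + 2 * K ^ 3) ≤ L ^ 2 := by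
    have := Real.sq_sqrt hfrac0
    nlinarith [mul_self_le_mul_self (Real.sqrt_nonneg ((1 + K ^ 2 - 2 * K ^ 3) / (1 + K ^ 2 + 2 * K ^ 3))) hL0]
  have hND : 1 + K ^ 2 - 2 * K ^ 3 ≤ L ^ 2 * (1 + K ^ 2 + 2 * K ^ 3) := by
    rw [div_le_iff₀ hD] at hL2; linarith
  set p := x₁ - x₂ with hp
  set q := F x₁ - F x₂ with hq
  have h1 : ⟪q, p⟫ ≥ K * ‖p‖ ^ 2 := hmono x₁ x₂
  have h2 : ‖q‖ ≤ (1 / K) * ‖p‖ := hlip x₁ x₂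
  have h2' : K ^ 2 * ‖q‖ ^ 2 ≤ ‖p‖ ^ 2 := by
    have h3 : K * ‖q‖ ≤ ‖p‖ := by
      rw [div_mul_eq_mul_div, le_div_iff₀ hK0] at h2; linarith [h2]
    nlinarith [norm_nonneg q, norm_nonneg p, mul_nonneg hK0.le (norm_nonneg q)]
  have hsub : ‖q - p‖ ^ 2 = ‖q‖ ^ 2 - 2 * ⟪q, p⟫ + ‖p‖ ^ 2 := norm_sub_sq_real q p
  have hadd : ‖q + p‖ ^ 2 = ‖q‖ ^ 2 + 2 * ⟪q, p⟫ + ‖p‖ ^ 2 := norm_add_sq_real q p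
  have key : ‖q - p‖ ^ 2 ≤ (L * ‖q + p‖) ^ 2 := by
    have expand : (L * ‖q + p‖) ^ 2 = L ^ 2 * (‖q‖ ^ 2 + 2 * ⟪q, p⟫ + ‖p‖ ^ 2) := by
      rw [mul_pow, hadd]
    rw [hsub, expand]
    nlinarith [mul_nonneg (mul_nonneg hLnn hLnn) (sq_nonneg (‖q‖ + ‖p‖)),
      mul_le_mul_of_nonneg_right hND (add_nonneg (sq_nonneg ‖q‖) (sq_nonneg ‖p‖)),
      mul_nonneg hK0.le (sq_nonneg ‖p‖),
      mul_le_mul_of_nonneg_left h2' (by positivity : (0:ℝ) ≤ 4 * K),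
      mul_le_mul_of_nonneg_left h1.le (by positivity : (0:ℝ) ≤ 2 * (1 + K^2 + 2*K^3) * (1 + L^2)),
      mul_nonneg (sq_nonneg L) (sq_nonneg ‖q‖), mul_nonneg (sq_nonneg L) (sq_nonneg ‖p‖)]
  have h4 : (0:ℝ) ≤ L * ‖q + p‖ := by positivity
  have := Real.sqrt_le_sqrt key
  rwa [Real.sqrt_sq (norm_nonneg _), Real.sqrt_sq h4] at this
end

section
/- For every k > 0, the Pila activation function Pila_k : ℝ → ℝ, defined by Pila_k(x) = x for x ≥ 0 and Pila_k(x) = ((k²/2)x³ − kx² + x)·exp(kx) for x < 0, is 1-Lipschitz: |Pila_k(x) − Pila_k(y)| ≤ |x − y| for all x, y ∈ ℝ. -/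
/-- The Pila activation function with parameter `k`. -/
noncomputable def Pila (k x : ℝ) : ℝ :=
  if 0 ≤ x then x else ((k ^ 2 / 2) * x ^ 3 - k * x ^ 2 + x) * Real.exp (k * x)

private lemma quartic_le_exp {u : ℝ} (hu : 0 ≤ u) :
    1 + u + u ^ 2 / 2 + u ^ 3 / 6 + u ^ 4 / 24 ≤ Real.exp u := by
  have h := Real.sum_le_exp_of_nonneg hu 5
  simp [Finset.sum_range_succ, Nat.factorial] at h
  linarith

private lemma absP_le {u : ℝ} (hu : 0 ≤ u) :
    |(-u ^ 3 / 2 + u ^ 2 / 2 + u + 1)| ≤ Real.exp u := by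
  have hexp := quartic_le_exp hu
  rw [abs_le]
  constructor
  · nlinarith [sq_nonneg (u ^ 2 - 4 * u), sq_nonneg u]
  · nlinarith [pow_nonneg hu 3, pow_nonneg hu 4]

private lemma exp_bound' {t : ℝ} (ht : t ≤ 0) :
    |Real.exp t * (t ^ 3 / 2 + t ^ 2 / 2 - t + 1)| ≤ 1 := by
  have hu : 0 ≤ -t := by linarith
  have h := absP_le hu
  calc |Real.exp t * (t ^ 3 / 2 + t ^ 2 / 2 - t + 1)|
      = Real.exp t * |(-(-t) ^ 3 / 2 + (-t) ^ 2 / 2 + (-t) + 1)| := by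
        rw [abs_mul, abs_of_pos (Real.exp_pos t)]; ring_nf
    _ ≤ Real.exp t * Real.exp (-t) := mul_le_mul_of_nonneg_left h (Real.exp_pos t).le
    _ = 1 := by rw [← Real.exp_add]; simp

private lemma deriv_bound (k x : ℝ) (hk : 0 < k) (hx : x ≤ 0) :
    |Real.exp (k * x) * ((k ^ 3 / 2) * x ^ 3 + (k ^ 2 / 2) * x ^ 2 - k * x + 1)| ≤ 1 := by
  have h := exp_bound' (t := k * x) (mul_nonpos_of_nonneg_of_nonpos hk.le hx)
  have : (k ^ 3 / 2) * x ^ 3 + (k ^ 2 / 2) * x ^ 2 - k * x + 1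
      = (k*x) ^ 3 / 2 + (k*x) ^ 2 / 2 - (k*x) + 1 := by ring
  rw [this]; exact h

private lemma pilaNeg_hasDerivAt (k x : ℝ) :
    HasDerivAt (fun x => ((k ^ 2 / 2) * x ^ 3 - k * x ^ 2 + x) * Real.exp (k * x))
      (Real.exp (k * x) * ((k ^ 3 / 2) * x ^ 3 + (k ^ 2 / 2) * x ^ 2 - k * x + 1)) x := by
  have hp : HasDerivAt (fun x : ℝ => (k ^ 2 / 2) * x ^ 3 - k * x ^ 2 + x)
      ((k ^ 2 / 2) * (3 * x ^ 2) - k * (2 * x) + 1) x := by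
    have h3 : HasDerivAt (fun x : ℝ => x ^ 3) (3 * x ^ 2) x := by
      simpa using hasDerivAt_pow 3 x
    have h2 : HasDerivAt (fun x : ℝ => x ^ 2) (2 * x) x := by
      simpa using hasDerivAt_pow 2 x
    exact ((h3.const_mul _).sub (h2.const_mul _)).add (hasDerivAt_id x)
  have he : HasDerivAt (fun x : ℝ => Real.exp (k * x)) (Real.exp (k * x) * k) x := by
    simpa using ((hasDerivAt_id x).const_mul k).exp
  have : HasDerivAt (fun x => ((k ^ 2 / 2) * x ^ 3 - k * x ^ 2 + x) * Real.exp (k * x)) _ x :=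
    hp.mul he
  convert this using 1
  ring

private lemma pilaNeg_lip (k : ℝ) (hk : 0 < k) {a b : ℝ} (ha : a ≤ 0) (hb : b ≤ 0) :
    |((k ^ 2 / 2) * a ^ 3 - k * a ^ 2 + a) * Real.exp (k * a)
      - ((k ^ 2 / 2) * b ^ 3 - k * b ^ 2 + b) * Real.exp (k * b)| ≤ |a - b| := by
  have hlip : LipschitzOnWith 1
      (fun x => ((k ^ 2 / 2) * x ^ 3 - k * x ^ 2 + x) * Real.exp (k * x)) (Set.Iic 0) := by
    apply (convex_Iic (0:ℝ)).lipschitzOnWith_of_nnnorm_hasDerivWithin_le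
      (f' := fun x => Real.exp (k * x) * ((k ^ 3 / 2) * x ^ 3 + (k ^ 2 / 2) * x ^ 2 - k * x + 1))
      (fun x _ => (pilaNeg_hasDerivAt k x).hasDerivWithinAt)
    intro x hx
    rw [← NNReal.coe_le_coe, coe_nnnorm, NNReal.coe_one, Real.norm_eq_abs]
    exact deriv_bound k x hk hx
  have := hlip.dist_le_mul a ha b hb
  simpa [Real.dist_eq] using this

private lemma pila_eq_neg (k : ℝ) {x : ℝ} (hx : x ≤ 0) :
    Pila k x = ((k ^ 2 / 2) * x ^ 3 - k * x ^ 2 + x) * Real.exp (k * x) := by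
  unfold Pila
  split_ifs with h
  · have hx0 : x = 0 := le_antisymm hx h
    subst hx0; simp
  · rfl

private lemma pila_lip_neg (k : ℝ) (hk : 0 < k) {a b : ℝ} (ha : a ≤ 0) (hb : b ≤ 0) :
    |Pila k a - Pila k b| ≤ |a - b| := by
  rw [pila_eq_neg k ha, pila_eq_neg k hb]
  exact pilaNeg_lip k hk ha hb

/-- For every `k > 0`, the Pila activation function is 1-Lipschitz. -/
theorem pila_one_lipschitz (k : ℝ) (hk : 0 < k) :
    ∀ x y : ℝ, |Pila k x - Pila k y| ≤ |x - y| := by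
  have h0 : Pila k 0 = 0 := by simp [Pila]
  intro x y
  rcases le_or_gt 0 x with hx | hx <;> rcases le_or_gt 0 y with hy | hy
  · simp [Pila, hx, hy]
  · -- 0 ≤ x, y < 0
    have h1 : |Pila k x - Pila k 0| ≤ |x - 0| := by simp [Pila, hx, h0, abs_of_nonneg hx]
    have h2 : |Pila k 0 - Pila k y| ≤ |0 - y| := pila_lip_neg k hk le_rfl hy.le
    have := (abs_sub_le (Pila k x) (Pila k 0) (Pila k y)).trans (add_le_add h1 h2)
    have hxy : |x - 0| + |0 - y| = |x - y| := by
      rw [abs_of_nonneg (by linarith : (0:ℝ) ≤ x - 0), abs_of_nonneg (by linarith : (0:ℝ) ≤ 0 - y),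
        abs_of_nonneg (by linarith : (0:ℝ) ≤ x - y)]; ring
    linarith
  · -- x < 0, 0 ≤ y
    have h1 : |Pila k x - Pila k 0| ≤ |x - 0| := pila_lip_neg k hk hx.le le_rfl
    have h2 : |Pila k 0 - Pila k y| ≤ |0 - y| := by
      simp [Pila, hy, h0, abs_of_nonneg hy]
    have := (abs_sub_le (Pila k x) (Pila k 0) (Pila k y)).trans (add_le_add h1 h2)
    have hxy : |x - 0| + |0 - y| = |x - y| := by
      rw [abs_of_nonpos (by linarith : x - 0 ≤ (0:ℝ)), abs_of_nonpos (by linarith : 0 - y ≤ (0:ℝ)),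
        abs_of_nonpos (by linarith : x - y ≤ (0:ℝ))]; ring
    linarith
  · exact pila_lip_neg k hk hx.le hy.le
end

section
/- For every k > 0, the Pila activation function Pila_k : ℝ → ℝ, defined by Pila_k(x) = x for x ≥ 0 and Pila_k(x) = ((k²/2)x³ − kx² + x)·exp(kx) for x < 0, is three times continuously differentiable on ℝ (ContDiff ℝ 3), with Pila_k(0) = 0, Pila_k′(0) = 1, Pila_k″(0) = 0, and Pila_k‴(0) = 0; i.e. Pila_k matches the identity function at x = 0 up to the third derivative. -/
/-- Gluing lemma: a function defined piecewise at `0` from two differentiable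
functions whose values and derivatives agree at `0` is differentiable, with the
piecewise derivative. -/
lemma glue_hasDerivAt {P Q P' Q' : ℝ → ℝ}
    (hP : ∀ x, HasDerivAt P (P' x) x) (hQ : ∀ x, HasDerivAt Q (Q' x) x)
    (h0 : P 0 = Q 0) (h0' : P' 0 = Q' 0) (x : ℝ) :
    HasDerivAt (fun y => if 0 ≤ y then P y else Q y)
      (if 0 ≤ x then P' x else Q' x) x := by
  rcases lt_trichotomy x 0 with hx | rfl | hx
  · rw [if_neg (not_le.2 hx)]
    refine (hQ x).congr_of_eventuallyEq ?_
    filter_upwards [Iio_mem_nhds hx] with y hy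
    rw [if_neg (not_le.2 hy)]
  · rw [if_pos le_rfl]
    have hIci : HasDerivWithinAt (fun y => if 0 ≤ y then P y else Q y)
        (P' 0) (Set.Ici 0) 0 :=
      (hP 0).hasDerivWithinAt.congr (fun y hy => if_pos hy) (if_pos le_rfl)
    have hIic : HasDerivWithinAt (fun y => if 0 ≤ y then P y else Q y)
        (P' 0) (Set.Iic 0) 0 := by
      rw [h0']
      refine (hQ 0).hasDerivWithinAt.congr (fun y hy => ?_) ?_
      · rcases lt_or_eq_of_le (Set.mem_Iic.mp hy) with hy' | rfl
        · rw [if_neg (not_le.2 hy')]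
        · simpa using h0
      · simpa using h0
    have h := hIic.union hIci
    rw [Set.Iic_union_Ici] at h
    exact hasDerivWithinAt_univ.mp h
  · rw [if_pos hx.le]
    refine (hP x).congr_of_eventuallyEq ?_
    filter_upwards [Ioi_mem_nhds hx] with y hy
    rw [if_pos hy.le]

/-- For every `k > 0`, Pila is three times continuously differentiable and
matches the identity function at `0` up to the third derivative. -/
theorem pila_contDiff_three_and_matches_id (k : ℝ) (hk : 0 < k) :
    ContDiff ℝ 3 (Pila k) ∧
    Pila k 0 = 0 ∧
    deriv (Pila k) 0 = 1 ∧
    iteratedDeriv 2 (Pila k) 0 = 0 ∧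
    iteratedDeriv 3 (Pila k) 0 = 0 := by
  set E : ℝ → ℝ := fun x => Real.exp (k * x) with hE
  have hexp : ∀ x : ℝ, HasDerivAt E (k * E x) x := by
    intro x
    simpa [hE, mul_comm, Function.comp_def] using (Real.hasDerivAt_exp (k * x)).comp x
      ((hasDerivAt_id x).const_mul k)
  -- the polynomials
  set p0 : ℝ → ℝ := fun x => k ^ 2 / 2 * x ^ 3 - k * x ^ 2 + x with hp0def
  set p1 : ℝ → ℝ := fun x => k ^ 3 / 2 * x ^ 3 + k ^ 2 / 2 * x ^ 2 - k * x + 1 with hp1def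
  set p2 : ℝ → ℝ := fun x => k ^ 4 / 2 * x ^ 3 + 2 * k ^ 3 * x ^ 2 with hp2def
  set p3 : ℝ → ℝ := fun x => k ^ 5 / 2 * x ^ 3 + 7 * k ^ 4 / 2 * x ^ 2 + 4 * k ^ 3 * x with hp3def
  have hd0 : ∀ x : ℝ, HasDerivAt (fun y => p0 y * E y) (p1 x * E x) x := by
    intro x
    have hp : HasDerivAt p0 (k ^ 2 / 2 * (3 * x ^ 2) - k * (2 * x) + 1) x := by
      have h1 := (hasDerivAt_pow 3 x).const_mul (k ^ 2 / 2)
      have h2 := (hasDerivAt_pow 2 x).const_mul k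
      have h3 := hasDerivAt_id' (x := x)
      have := (h1.sub h2).add h3
      exact this.congr_deriv (by push_cast; ring)
    have := hp.mul (hexp x)
    refine this.congr_deriv ?_
    simp only [hp0def, hp1def]
    ring
  have hd1 : ∀ x : ℝ, HasDerivAt (fun y => p1 y * E y) (p2 x * E x) x := by
    intro x
    have hp : HasDerivAt p1 (k ^ 3 / 2 * (3 * x ^ 2) + k ^ 2 / 2 * (2 * x) - k) x := by
      have h1 := (hasDerivAt_pow 3 x).const_mul (k ^ 3 / 2)
      have h2 := (hasDerivAt_pow 2 x).const_mul (k ^ 2 / 2)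
      have h3 := (hasDerivAt_id' (x := x)).const_mul k
      have h4 : HasDerivAt (fun _ : ℝ => (1 : ℝ)) 0 x := hasDerivAt_const x 1
      have := ((h1.add h2).sub h3).add h4
      exact this.congr_deriv (by push_cast; ring)
    have := hp.mul (hexp x)
    refine this.congr_deriv ?_
    simp only [hp1def, hp2def]
    ring
  have hd2 : ∀ x : ℝ, HasDerivAt (fun y => p2 y * E y) (p3 x * E x) x := by
    intro x
    have hp : HasDerivAt p2 (k ^ 4 / 2 * (3 * x ^ 2) + 2 * k ^ 3 * (2 * x)) x := by
      have h1 := (hasDerivAt_pow 3 x).const_mul (k ^ 4 / 2)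
      have h2 := (hasDerivAt_pow 2 x).const_mul (2 * k ^ 3)
      have := h1.add h2
      exact this.congr_deriv (by push_cast; ring)
    have := hp.mul (hexp x)
    refine this.congr_deriv ?_
    simp only [hp2def, hp3def]
    ring
  -- the successive derivative functions
  set F1 : ℝ → ℝ := fun x => if 0 ≤ x then 1 else p1 x * E x with hF1
  set F2 : ℝ → ℝ := fun x => if 0 ≤ x then 0 else p2 x * E x with hF2
  set F3 : ℝ → ℝ := fun x => if 0 ≤ x then 0 else p3 x * E x with hF3
  have hPila : Pila k = fun y => if 0 ≤ y then (fun z : ℝ => z) y else (fun z => p0 z * E z) y := by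
    funext y; simp [Pila, hp0def, hE]
  have hD0 : ∀ x, HasDerivAt (Pila k) (F1 x) x := by
    intro x
    rw [hPila]
    have := glue_hasDerivAt (P := fun z : ℝ => z) (Q := fun z => p0 z * E z)
      (P' := fun _ => 1) (Q' := fun z => p1 z * E z)
      (fun x => hasDerivAt_id x) hd0 (by simp [hp0def, hE]) (by simp [hp1def, hE]) x
    simpa [hF1] using this
  have hD1 : ∀ x, HasDerivAt F1 (F2 x) x := by
    intro x
    have := glue_hasDerivAt (P := fun _ : ℝ => (1 : ℝ)) (Q := fun z => p1 z * E z)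
      (P' := fun _ => 0) (Q' := fun z => p2 z * E z)
      (fun x => hasDerivAt_const x 1) hd1 (by simp [hp1def, hE]) (by simp [hp2def, hE]) x
    simpa [hF1, hF2] using this
  have hD2 : ∀ x, HasDerivAt F2 (F3 x) x := by
    intro x
    have := glue_hasDerivAt (P := fun _ : ℝ => (0 : ℝ)) (Q := fun z => p2 z * E z)
      (P' := fun _ => 0) (Q' := fun z => p3 z * E z)
      (fun x => hasDerivAt_const x 0) hd2 (by simp [hp2def, hE]) (by simp [hp3def, hE]) x
    simpa [hF2, hF3] using this
  have hderiv0 : deriv (Pila k) = F1 := funext fun x => (hD0 x).deriv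
  have hderiv1 : deriv F1 = F2 := funext fun x => (hD1 x).deriv
  have hderiv2 : deriv F2 = F3 := funext fun x => (hD2 x).deriv
  have hcont3 : Continuous F3 := by
    rw [hF3]
    refine Continuous.if_le ?_ ?_ continuous_const continuous_id ?_
    · exact continuous_const
    · exact (by fun_prop : Continuous fun x => p3 x * E x)
    · intro x hx
      simp [← hx, hp3def, hE]
  have hcd : ContDiff ℝ 3 (Pila k) := by
    rw [show (3 : WithTop ℕ∞) = 2 + 1 from rfl, contDiff_succ_iff_deriv]
    refine ⟨fun x => (hD0 x).differentiableAt, by simp, ?_⟩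
    rw [hderiv0, show (2 : WithTop ℕ∞) = 1 + 1 from rfl, contDiff_succ_iff_deriv]
    refine ⟨fun x => (hD1 x).differentiableAt, by simp, ?_⟩
    rw [hderiv1, show (1 : WithTop ℕ∞) = 0 + 1 from rfl, contDiff_succ_iff_deriv]
    refine ⟨fun x => (hD2 x).differentiableAt, by simp, ?_⟩
    rw [hderiv2]
    exact contDiff_zero.mpr hcont3
  refine ⟨hcd, by simp [Pila], ?_, ?_, ?_⟩
  · rw [hderiv0]; simp [hF1]
  · rw [iteratedDeriv_succ, iteratedDeriv_one, hderiv0, hderiv1]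
    simp [hF2]
  · rw [iteratedDeriv_succ, iteratedDeriv_succ, iteratedDeriv_one, hderiv0, hderiv1, hderiv2]
    simp [hF3]
end

section
/- The map CPila : ℝ → ℝ² defined by CPila(x) = (1/1.06)·(Pila₅(x − 0.2), Pila₅(−x − 0.2)) is 1-Lipschitz, where Pila₅(x) = x for x ≥ 0 and Pila₅(x) = (12.5x³ − 5x² + x)·exp(5x) for x < 0, and ℝ² carries the Euclidean norm. -/
set_option maxHeartbeats 2000000

open Real Set

/-- Concatenated Pila: `CPila x = (1/1.06) • (Pila₅ (x - 0.2), Pila₅ (-x - 0.2))`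
as a map `ℝ → ℝ²` (Euclidean norm). -/
noncomputable def CPila (x : ℝ) : EuclideanSpace ℝ (Fin 2) :=
  (1 / 1.06 : ℝ) •
    (WithLp.equiv 2 (Fin 2 → ℝ)).symm ![Pila 5 (x - 0.2), Pila 5 (-x - 0.2)]

/-- The polynomial factor in the derivative of `Pila 5` on the negatives. -/
noncomputable def q5 (t : ℝ) : ℝ := (125/2)*t^3 + (25/2)*t^2 - 5*t + 1

/-- Degree-4 Taylor polynomial of `exp`. -/
noncomputable def T4 (u : ℝ) : ℝ := 1 + u + u^2/2 + u^3/6 + u^4/24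

/-- Degree-14 Taylor polynomial of `exp (10 s)` as a polynomial in `s`. -/
noncomputable def S14 (s : ℝ) : ℝ := 1 + 10*s^1 + 50*s^2 + (500/3)*s^3 + (1250/3)*s^4 + (2500/3)*s^5 + (12500/9)*s^6 + (125000/63)*s^7 + (156250/63)*s^8 + (1562500/567)*s^9 + (1562500/567)*s^10 + (15625000/6237)*s^11 + (39062500/18711)*s^12 + (390625000/243243)*s^13 + (1953125000/1702701)*s^14

/-- Pointwise derivative of `Pila 5`. -/
noncomputable def dP (t : ℝ) : ℝ := if 0 ≤ t then 1 else q5 t * Real.exp (5*t)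

lemma T4_le_exp {u : ℝ} (hu : 0 ≤ u) : T4 u ≤ Real.exp u := by
  have h := Real.sum_le_exp_of_nonneg hu 5
  have e : ∑ i ∈ Finset.range 5, u ^ i / (i.factorial : ℝ) = T4 u := by
    simp [Finset.sum_range_succ, Nat.factorial]
    unfold T4; ring
  linarith [h, e.ge, e.le]

lemma S14_le_exp {s : ℝ} (hs : 0 ≤ s) : S14 s ≤ Real.exp (10*s) := by
  have h := Real.sum_le_exp_of_nonneg (by linarith : (0:ℝ) ≤ 10*s) 15
  have e : ∑ i ∈ Finset.range 15, (10*s) ^ i / (i.factorial : ℝ) = S14 s := by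
    simp [Finset.sum_range_succ, Nat.factorial]
    unfold S14; ring
  linarith [h, e.ge, e.le]

lemma tail_poly (s : ℝ) (hs : 2/5 ≤ s) :
    (1 + 5*s + (25/2)*s^2 - (125/2)*s^3)^2 ≤ (309/2500) * S14 s := by
  unfold S14
  rcases le_or_gt s (3/5) with h0|h0
  · have hA : (0:ℝ) ≤ s - (2/5) := by linarith
    have hB : (0:ℝ) ≤ (3/5) - s := by linarith
    linarith [mul_nonneg (pow_nonneg hA 0) (pow_nonneg hB 14), mul_nonneg (pow_nonneg hA 1) (pow_nonneg hB 13), mul_nonneg (pow_nonneg hA 2) (pow_nonneg hB 12), mul_nonneg (pow_nonneg hA 3) (pow_nonneg hB 11), mul_nonneg (pow_nonneg hA 4) (pow_nonneg hB 10), mul_nonneg (pow_nonneg hA 5) (pow_nonneg hB 9), mul_nonneg (pow_nonneg hA 6) (pow_nonneg hB 8), mul_nonneg (pow_nonneg hA 7) (pow_nonneg hB 7), mul_nonneg (pow_nonneg hA 8) (pow_nonneg hB 6), mul_nonneg (pow_nonneg hA 9) (pow_nonneg hB 5), mul_nonneg (pow_nonneg hA 10) (pow_nonneg hB 4), mul_nonneg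 (pow_nonneg hA 11) (pow_nonneg hB 3), mul_nonneg (pow_nonneg hA 12) (pow_nonneg hB 2), mul_nonneg (pow_nonneg hA 13) (pow_nonneg hB 1), mul_nonneg (pow_nonneg hA 14) (pow_nonneg hB 0)]
  rcases le_or_gt s (4/5) with h1|h1
  · have hA : (0:ℝ) ≤ s - (3/5) := by linarith
    have hB : (0:ℝ) ≤ (4/5) - s := by linarith
    linarith [mul_nonneg (pow_nonneg hA 0) (pow_nonneg hB 14), mul_nonneg (pow_nonneg hA 1) (pow_nonneg hB 13), mul_nonneg (pow_nonneg hA 2) (pow_nonneg hB 12), mul_nonneg (pow_nonneg hA 3) (pow_nonneg hB 11), mul_nonneg (pow_nonneg hA 4) (pow_nonneg hB 10), mul_nonneg (pow_nonneg hA 5) (pow_nonneg hB 9), mul_nonneg (pow_nonneg hA 6) (pow_nonneg hB 8), mul_nonneg (pow_nonneg hA 7) (pow_nonneg hB 7), mul_nonneg (pow_nonneg hA 8) (pow_nonneg hB 6), mul_nonneg (pow_nonneg hA 9) (pow_nonneg hB 5), mul_nonneg (pow_nonneg hA 10) (pow_nonneg hB 4), mul_nonneg (pow_nonneg hA 11)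 (pow_nonneg hB 3), mul_nonneg (pow_nonneg hA 12) (pow_nonneg hB 2), mul_nonneg (pow_nonneg hA 13) (pow_nonneg hB 1), mul_nonneg (pow_nonneg hA 14) (pow_nonneg hB 0)]
  rcases le_or_gt s (1) with h2|h2
  · have hA : (0:ℝ) ≤ s - (4/5) := by linarith
    have hB : (0:ℝ) ≤ (1) - s := by linarith
    linarith [mul_nonneg (pow_nonneg hA 0) (pow_nonneg hB 14), mul_nonneg (pow_nonneg hA 1) (pow_nonneg hB 13), mul_nonneg (pow_nonneg hA 2) (pow_nonneg hB 12), mul_nonneg (pow_nonneg hA 3) (pow_nonneg hB 11), mul_nonneg (pow_nonneg hA 4) (pow_nonneg hB 10), mul_nonneg (pow_nonneg hA 5) (pow_nonneg hB 9), mul_nonneg (pow_nonneg hA 6) (pow_nonneg hB 8), mul_nonneg (pow_nonneg hA 7) (pow_nonneg hB 7), mul_nonneg (pow_nonneg hA 8) (pow_nonneg hB 6), mul_nonneg (pow_nonneg hA 9) (pow_nonneg hB 5), mul_nonneg (pow_nonneg hA 10) (pow_nonneg hB 4), mul_nonneg (pow_nonneg hA 11) (pow_nonneg hB 3), mul_nonneg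 (pow_nonneg hA 12) (pow_nonneg hB 2), mul_nonneg (pow_nonneg hA 13) (pow_nonneg hB 1), mul_nonneg (pow_nonneg hA 14) (pow_nonneg hB 0)]
  rcases le_or_gt s (3/2) with h3|h3
  · have hA : (0:ℝ) ≤ s - (1) := by linarith
    have hB : (0:ℝ) ≤ (3/2) - s := by linarith
    linarith [mul_nonneg (pow_nonneg hA 0) (pow_nonneg hB 14), mul_nonneg (pow_nonneg hA 1) (pow_nonneg hB 13), mul_nonneg (pow_nonneg hA 2) (pow_nonneg hB 12), mul_nonneg (pow_nonneg hA 3) (pow_nonneg hB 11), mul_nonneg (pow_nonneg hA 4) (pow_nonneg hB 10), mul_nonneg (pow_nonneg hA 5) (pow_nonneg hB 9), mul_nonneg (pow_nonneg hA 6) (pow_nonneg hB 8), mul_nonneg (pow_nonneg hA 7) (pow_nonneg hB 7), mul_nonneg (pow_nonneg hA 8) (pow_nonneg hB 6), mul_nonneg (pow_nonneg hA 9) (pow_nonneg hB 5), mul_nonneg (pow_nonneg hA 10) (pow_nonneg hB 4), mul_nonneg (pow_nonneg hA 11) (pow_nonneg hB 3), mul_nonneg (pow_nonneg hA 12) (pow_nonneg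 hB 2), mul_nonneg (pow_nonneg hA 13) (pow_nonneg hB 1), mul_nonneg (pow_nonneg hA 14) (pow_nonneg hB 0)]
  rcases le_or_gt s (2) with h4|h4
  · have hA : (0:ℝ) ≤ s - (3/2) := by linarith
    have hB : (0:ℝ) ≤ (2) - s := by linarith
    linarith [mul_nonneg (pow_nonneg hA 0) (pow_nonneg hB 14), mul_nonneg (pow_nonneg hA 1) (pow_nonneg hB 13), mul_nonneg (pow_nonneg hA 2) (pow_nonneg hB 12), mul_nonneg (pow_nonneg hA 3) (pow_nonneg hB 11), mul_nonneg (pow_nonneg hA 4) (pow_nonneg hB 10), mul_nonneg (pow_nonneg hA 5) (pow_nonneg hB 9), mul_nonneg (pow_nonneg hA 6) (pow_nonneg hB 8), mul_nonneg (pow_nonneg hA 7) (pow_nonneg hB 7), mul_nonneg (pow_nonneg hA 8) (pow_nonneg hB 6), mul_nonneg (pow_nonneg hA 9) (pow_nonneg hB 5), mul_nonneg (pow_nonneg hA 10) (pow_nonneg hB 4), mul_nonneg (pow_nonneg hA 11) (pow_nonneg hB 3), mul_nonneg (pow_nonneg hA 12) (pow_nonneg hB 2), mul_nonneg (pow_nonneg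 hA 13) (pow_nonneg hB 1), mul_nonneg (pow_nonneg hA 14) (pow_nonneg hB 0)]
  · have hA : (0:ℝ) ≤ s - 2 := by linarith
    linarith [pow_nonneg hA 0, pow_nonneg hA 1, pow_nonneg hA 2, pow_nonneg hA 3, pow_nonneg hA 4, pow_nonneg hA 5, pow_nonneg hA 6, pow_nonneg hA 7, pow_nonneg hA 8, pow_nonneg hA 9, pow_nonneg hA 10, pow_nonneg hA 11, pow_nonneg hA 12, pow_nonneg hA 13, pow_nonneg hA 14]

lemma mid_poly (a : ℝ) (h1 : -(1/5) ≤ a) (h2 : a ≤ 0) :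
    (q5 a)^2 * (T4 (-5*(-(2/5)-a)))^2 + (q5 (-(2/5)-a))^2 * (T4 (-5*a))^2
      ≤ 2809/2500 * ((T4 (-5*a))^2 * (T4 (-5*(-(2/5)-a)))^2) := by
  unfold q5 T4
  have hA : (0:ℝ) ≤ a + 1/5 := by linarith
  have hB : (0:ℝ) ≤ -a := by linarith
  linarith [mul_nonneg (pow_nonneg hA 0) (pow_nonneg hB 21), mul_nonneg (pow_nonneg hA 1) (pow_nonneg hB 20), mul_nonneg (pow_nonneg hA 2) (pow_nonneg hB 19), mul_nonneg (pow_nonneg hA 3) (pow_nonneg hB 18), mul_nonneg (pow_nonneg hA 4) (pow_nonneg hB 17), mul_nonneg (pow_nonneg hA 5) (pow_nonneg hB 16), mul_nonneg (pow_nonneg hA 6) (pow_nonneg hB 15), mul_nonneg (pow_nonneg hA 7) (pow_nonneg hB 14), mul_nonneg (pow_nonneg hA 8) (pow_nonneg hB 13), mul_nonneg (pow_nonneg hA 9) (pow_nonneg hB 12), mul_nonneg (pow_nonneg hA 10) (pow_nonneg hB 11), mul_nonneg (pow_nonneg hA 11) (pow_nonneg hB 10), mul_nonneg (pow_nonneg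 hA 12) (pow_nonneg hB 9), mul_nonneg (pow_nonneg hA 13) (pow_nonneg hB 8), mul_nonneg (pow_nonneg hA 14) (pow_nonneg hB 7), mul_nonneg (pow_nonneg hA 15) (pow_nonneg hB 6), mul_nonneg (pow_nonneg hA 16) (pow_nonneg hB 5), mul_nonneg (pow_nonneg hA 17) (pow_nonneg hB 4), mul_nonneg (pow_nonneg hA 18) (pow_nonneg hB 3), mul_nonneg (pow_nonneg hA 19) (pow_nonneg hB 2), mul_nonneg (pow_nonneg hA 20) (pow_nonneg hB 1), mul_nonneg (pow_nonneg hA 21) (pow_nonneg hB 0)]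

lemma S14_pos {s : ℝ} (hs : 0 ≤ s) : 0 < S14 s := by
  unfold S14
  have := pow_nonneg hs
  nlinarith [this 1, this 2, this 3, this 4, this 5, this 6, this 7, this 8, this 9,
    this 10, this 11, this 12, this 13, this 14]

lemma T4_pos {u : ℝ} (hu : 0 ≤ u) : 0 < T4 u := by
  unfold T4
  have := pow_nonneg hu
  nlinarith [this 2, this 3, this 4]

lemma dP_sq_neg {t : ℝ} (ht : t < 0) : dP t ^ 2 = q5 t ^ 2 * Real.exp (10 * t) := by
  rw [dP, if_neg (not_le.2 ht), mul_pow]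
  congr 1
  rw [← Real.exp_nat_mul]
  congr 1
  ring

lemma exp_sq_le_of_nonpos {t : ℝ} (ht : t ≤ 0) :
    Real.exp (10 * t) ≤ 1 / T4 (-5 * t) ^ 2 := by
  have h1 : T4 (-5 * t) ≤ Real.exp (-5 * t) := T4_le_exp (by linarith)
  have h2 : 0 < T4 (-5 * t) := T4_pos (by linarith)
  have h3 : Real.exp (10 * t) = 1 / (Real.exp (-5 * t)) ^ 2 := by
    rw [← Real.exp_nat_mul, eq_div_iff (by positivity), ← Real.exp_add,
      show (10:ℝ) * t + (2:ℕ) * (-5 * t) = 0 by push_cast; ring, Real.exp_zero]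
  rw [h3]
  apply div_le_div_of_nonneg_left (by norm_num) (by positivity)
  have h4 := Real.exp_pos (-5 * t)
  nlinarith [mul_le_mul h1 h1 h2.le h4.le]

lemma dP_sq_tail {t : ℝ} (ht : t ≤ -(2/5)) : dP t ^ 2 ≤ 309/2500 := by
  have ht0 : t < 0 := by linarith
  rw [dP_sq_neg ht0]
  have hs : 2/5 ≤ -t := by linarith
  have hS : S14 (-t) ≤ Real.exp (10 * -t) := S14_le_exp (by linarith)
  have hSpos : 0 < S14 (-t) := S14_pos (by linarith)
  have hq : q5 t ^ 2 ≤ 309/2500 * S14 (-t) := by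
    have := tail_poly (-t) hs
    have e : (1 + 5*(-t) + (25/2)*(-t)^2 - (125/2)*(-t)^3) = q5 t := by unfold q5; ring
    rw [e] at this
    exact this
  have hexp : Real.exp (10 * t) = 1 / Real.exp (10 * -t) := by
    rw [eq_div_iff (Real.exp_pos _).ne', ← Real.exp_add]
    norm_num
  rw [hexp]
  rw [mul_one_div, div_le_iff₀ (Real.exp_pos _)]
  calc q5 t ^ 2 ≤ 309/2500 * S14 (-t) := hq
    _ ≤ 309/2500 * Real.exp (10 * -t) := by nlinarith
    _ = 309/2500 * Real.exp (10 * -t) := rfl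

lemma dP_sq_single {t : ℝ} (ht : t < 0) : dP t ^ 2 ≤ q5 t ^ 2 / T4 (-5 * t) ^ 2 := by
  rw [dP_sq_neg ht]
  have hT : 0 < T4 (-5 * t) := T4_pos (by linarith)
  have hE : Real.exp (10 * t) ≤ 1 / T4 (-5 * t) ^ 2 := exp_sq_le_of_nonpos ht.le
  calc q5 t ^ 2 * Real.exp (10 * t) ≤ q5 t ^ 2 * (1 / T4 (-5 * t) ^ 2) :=
        mul_le_mul_of_nonneg_left hE (sq_nonneg _)
    _ = q5 t ^ 2 / T4 (-5 * t) ^ 2 := by rw [mul_one_div]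

lemma dP_sq_mid {a : ℝ} (h1 : -(1/5) ≤ a) (h2 : a < 0) :
    dP a ^ 2 + dP (-(2/5) - a) ^ 2 ≤ 2809/2500 := by
  have hb : -(2/5) - a < 0 := by linarith
  have hTa : 0 < T4 (-5 * a) := T4_pos (by linarith)
  have hTb : 0 < T4 (-5 * (-(2/5) - a)) := T4_pos (by linarith)
  have e1 := dP_sq_single h2
  have e2 := dP_sq_single hb
  have hmid := mid_poly a h1 h2.le
  have hTa2 : (0:ℝ) < T4 (-5 * a) ^ 2 := by positivity
  have hTb2 : (0:ℝ) < T4 (-5 * (-(2/5) - a)) ^ 2 := by positivity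
  have key : q5 a ^ 2 / T4 (-5 * a) ^ 2 + q5 (-(2/5) - a) ^ 2 / T4 (-5 * (-(2/5) - a)) ^ 2
      ≤ 2809/2500 := by
    rw [div_add_div _ _ hTa2.ne' hTb2.ne', div_le_iff₀ (by positivity)]
    nlinarith [hmid]
  linarith [e1, e2, key]
lemma key_nonneg {x : ℝ} (hx : 0 ≤ x) :
    dP (x - 1/5) ^ 2 + dP (-x - 1/5) ^ 2 ≤ 2809/2500 := by
  rcases le_or_gt (1/5) x with h|h
  · have h1 : dP (x - 1/5) = 1 := if_pos (by linarith)
    have h2 : dP (-x - 1/5) ^ 2 ≤ 309/2500 := dP_sq_tail (by linarith)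
    rw [h1]
    norm_num
    linarith
  · have h1 : -(1/5) ≤ x - 1/5 := by linarith
    have h2 : x - 1/5 < 0 := by linarith
    have := dP_sq_mid h1 h2
    have e : -(2/5) - (x - 1/5) = -x - 1/5 := by ring
    rw [e] at this
    exact this

lemma key (x : ℝ) : dP (x - 1/5) ^ 2 + dP (-x - 1/5) ^ 2 ≤ 2809/2500 := by
  rcases le_or_gt 0 x with h|h
  · exact key_nonneg h
  · have := key_nonneg (x := -x) (by linarith)
    have e : -(-x) - 1/5 = x - 1/5 := by ring
    rw [e] at this
    linarith

lemma hasDerivAt_pila (t : ℝ) : HasDerivAt (Pila 5) (dP t) t := by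
  have hf : ∀ u : ℝ, HasDerivAt
      (fun y : ℝ => (((5:ℝ) ^ 2 / 2) * y ^ 3 - 5 * y ^ 2 + y) * Real.exp (5 * y))
      (q5 u * Real.exp (5 * u)) u := by
    intro u
    have h3 : HasDerivAt (fun y : ℝ => y ^ 3) (3 * u ^ 2) u := by
      simpa using hasDerivAt_pow 3 u
    have h2 : HasDerivAt (fun y : ℝ => y ^ 2) (2 * u) u := by
      simpa using hasDerivAt_pow 2 u
    have h1 : HasDerivAt (fun y : ℝ => ((5:ℝ) ^ 2 / 2) * y ^ 3 - 5 * y ^ 2 + y)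
        (((5:ℝ) ^ 2 / 2) * (3 * u ^ 2) - 5 * (2 * u) + 1) u :=
      ((h3.const_mul ((5:ℝ) ^ 2 / 2)).sub (h2.const_mul (5:ℝ))).add (hasDerivAt_id u)
    have hE : HasDerivAt (fun y : ℝ => Real.exp (5 * y)) (Real.exp (5 * u) * 5) u := by
      simpa [Function.comp_def] using (Real.hasDerivAt_exp (5 * u)).comp u ((hasDerivAt_id u).const_mul (5:ℝ))
    have := h1.mul hE
    refine this.congr_deriv ?_
    unfold q5
    ring
  rcases lt_trichotomy t 0 with ht|ht|ht
  · have hev : Pila 5 =ᶠ[nhds t]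
        (fun y : ℝ => (((5:ℝ) ^ 2 / 2) * y ^ 3 - 5 * y ^ 2 + y) * Real.exp (5 * y)) := by
      filter_upwards [Iio_mem_nhds ht] with y hy
      simp only [Pila, if_neg (not_le.2 (Set.mem_Iio.1 hy))]
    have h := (hf t).congr_of_eventuallyEq hev
    have e : dP t = q5 t * Real.exp (5 * t) := if_neg (not_le.2 ht)
    rw [e]
    exact h
  · subst ht
    have hL : HasDerivWithinAt (Pila 5) (q5 0 * Real.exp (5 * 0)) (Set.Iic 0) 0 := by
      refine ((hf 0).hasDerivWithinAt).congr (fun y hy => ?_) ?_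
      · rcases lt_or_eq_of_le (Set.mem_Iic.1 hy) with h|h
        · simp only [Pila, if_neg (not_le.2 h)]
        · subst h
          simp [Pila]
      · simp [Pila]
    have hL1 : HasDerivWithinAt (Pila 5) 1 (Set.Iic 0) 0 := by
      have e : q5 0 * Real.exp (5 * 0) = 1 := by
        unfold q5
        norm_num
      rwa [e] at hL
    have hR : HasDerivWithinAt (Pila 5) 1 (Set.Ici 0) 0 := by
      refine ((hasDerivAt_id (0:ℝ)).hasDerivWithinAt).congr (fun y hy => ?_) ?_
      · simp only [Pila, if_pos (Set.mem_Ici.1 hy), id_eq]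
      · simp [Pila]
    have hU := hL1.union hR
    rw [Set.Iic_union_Ici] at hU
    have h := hasDerivWithinAt_univ.1 hU
    have e : dP 0 = 1 := if_pos le_rfl
    rw [e]
    exact h
  · have hev : Pila 5 =ᶠ[nhds t] (fun y : ℝ => y) := by
      filter_upwards [Ioi_mem_nhds ht] with y hy
      simp only [Pila, if_pos (le_of_lt (Set.mem_Ioi.1 hy))]
    have h := (hasDerivAt_id t).congr_of_eventuallyEq hev
    have e : dP t = 1 := if_pos ht.le
    rw [e]
    exact h
/-- Pointwise derivative of `CPila`. -/
noncomputable def dC (x : ℝ) : EuclideanSpace ℝ (Fin 2) :=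
  (1 / 1.06 : ℝ) • (WithLp.equiv 2 (Fin 2 → ℝ)).symm ![dP (x - 0.2), -dP (-x - 0.2)]

lemma hasDerivAt_cpila (x : ℝ) : HasDerivAt CPila (dC x) x := by
  have h1 : HasDerivAt (fun y : ℝ => Pila 5 (y - 0.2)) (dP (x - 0.2)) x := by
    have := (hasDerivAt_pila (x - 0.2)).comp x ((hasDerivAt_id x).sub_const 0.2)
    simpa [Function.comp_def] using this
  have h2 : HasDerivAt (fun y : ℝ => Pila 5 (-y - 0.2)) (-dP (-x - 0.2)) x := by
    have := (hasDerivAt_pila (-x - 0.2)).comp x (((hasDerivAt_id x).neg).sub_const 0.2)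
    simpa [Function.comp_def] using this
  have hpi : HasDerivAt (fun y : ℝ => (![Pila 5 (y - 0.2), Pila 5 (-y - 0.2)] : Fin 2 → ℝ))
      (![dP (x - 0.2), -dP (-x - 0.2)]) x := by
    apply hasDerivAt_pi.2
    intro i
    fin_cases i
    · simpa using h1
    · simpa using h2
  have hL := (((EuclideanSpace.equiv (Fin 2) ℝ).symm :
      (Fin 2 → ℝ) →L[ℝ] EuclideanSpace ℝ (Fin 2)).hasFDerivAt).comp_hasDerivAt x hpi
  have := hL.const_smul ((1:ℝ) / 1.06)
  exact this

lemma norm_dC_le (x : ℝ) : ‖dC x‖ ≤ 1 := by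
  have hkey : dP (x - 0.2) ^ 2 + dP (-x - 0.2) ^ 2 ≤ 2809/2500 := by
    have e : (0.2 : ℝ) = 1/5 := by norm_num
    rw [e]
    exact key x
  have hv : ‖(WithLp.equiv 2 (Fin 2 → ℝ)).symm ![dP (x - 0.2), -dP (-x - 0.2)]‖ ≤ 1.06 := by
    rw [EuclideanSpace.norm_eq]
    have e : ∑ i : Fin 2, ‖((WithLp.equiv 2 (Fin 2 → ℝ)).symm ![dP (x - 0.2), -dP (-x - 0.2)]) i‖ ^ 2
        = dP (x - 0.2) ^ 2 + dP (-x - 0.2) ^ 2 := by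
      simp [Fin.sum_univ_two, WithLp.equiv_symm_apply, PiLp.toLp_apply, Real.norm_eq_abs, sq_abs]
    rw [e]
    have h1 : Real.sqrt (dP (x - 0.2) ^ 2 + dP (-x - 0.2) ^ 2) ≤ Real.sqrt (2809/2500) :=
      Real.sqrt_le_sqrt hkey
    have h2 : Real.sqrt (2809/2500) = 1.06 := by
      rw [show (2809/2500 : ℝ) = 1.06 ^ 2 by norm_num]
      exact Real.sqrt_sq (by norm_num)
    linarith
  unfold dC
  rw [norm_smul, Real.norm_eq_abs]
  rw [abs_of_pos (by norm_num : (0:ℝ) < 1 / 1.06)]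
  calc (1 / 1.06 : ℝ) * ‖(WithLp.equiv 2 (Fin 2 → ℝ)).symm ![dP (x - 0.2), -dP (-x - 0.2)]‖
      ≤ (1 / 1.06 : ℝ) * 1.06 := by
        apply mul_le_mul_of_nonneg_left hv (by norm_num)
    _ = 1 := by norm_num

/-- CPila is 1-Lipschitz for the Euclidean norm on `ℝ²`. -/
theorem cpila_one_lipschitz : ∀ x y : ℝ, ‖CPila x - CPila y‖ ≤ |x - y| := by
  intro x y
  have h := Convex.norm_image_sub_le_of_norm_hasDerivWithin_le (f := CPila) (f' := dC)
    (s := Set.univ) (C := 1)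
    (fun z _ => (hasDerivAt_cpila z).hasDerivWithinAt)
    (fun z _ => norm_dC_le z) convex_univ (Set.mem_univ y) (Set.mem_univ x)
  simpa [Real.norm_eq_abs] using h
end
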